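/- arXiv:1908.04049 — 4 statements merged into one kernel-verified Lean document; each statement's English description precedes it below -/
import Mathlib

section
/- Let m be a positive integer and let a be a real number with 1 ≤ a ≤ 2m. Then there exists a constant C > 0, depending only on m and a, such that for every x ∈ ℕ₀ the following holds: if a ≠ 1 and a ≠ 2m, then ∑_{p=0}^{x} (1+x−p)^{a−2} (1+p)^{m−a/2−1} ≤ C (1+x)^{m+a/2−2}; and if a = 1 or a = 2m, then ∑_{p=0}^{x} (1+x−p)^{a−2} (1+p)^{m−a/2−1} ≤ C (1+x)^{m+a/2−2} log(2+x). -/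
open Finset Real

-- y^α ≤ 2 X^α when X/2 ≤ y ≤ X, α ≥ -1
lemma half_rpow {α X y : ℝ} (hα : -1 ≤ α) (hX : 0 < X) (h1 : X / 2 ≤ y) (h2 : y ≤ X) :
    y ^ α ≤ 2 * X ^ α := by
  have hy : 0 < y := lt_of_lt_of_le (by linarith) h1
  rcases le_or_gt 0 α with h | h
  · have h3 : y ^ α ≤ X ^ α := Real.rpow_le_rpow hy.le h2 h
    nlinarith [Real.rpow_nonneg hX.le α]
  · have h3 : y ^ α ≤ (X / 2) ^ α := Real.rpow_le_rpow_of_nonpos (by linarith) h1 h.le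
    have h4 : (X / 2) ^ α = X ^ α * ((2:ℝ) ^ α)⁻¹ := by
      rw [div_eq_mul_inv, Real.mul_rpow hX.le (by norm_num), Real.inv_rpow (by norm_num)]
    have h5 : ((2:ℝ) ^ α)⁻¹ = (2:ℝ) ^ (-α) := by
      rw [← Real.rpow_neg (by norm_num)]
    have h6 : (2:ℝ) ^ (-α) ≤ (2:ℝ) ^ (1:ℝ) :=
      Real.rpow_le_rpow_of_exponent_le (by norm_num) (by linarith)
    rw [Real.rpow_one] at h6
    have h7 : (0:ℝ) ≤ X ^ α := Real.rpow_nonneg hX.le α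
    calc y ^ α ≤ X ^ α * ((2:ℝ) ^ α)⁻¹ := by rw [← h4]; exact h3
      _ = X ^ α * (2:ℝ) ^ (-α) := by rw [h5]
      _ ≤ X ^ α * 2 := by nlinarith
      _ = 2 * X ^ α := by ring

-- telescoping term bound for 0 < s ≤ 1
lemma tele {s : ℝ} (hs0 : 0 < s) (hs1 : s ≤ 1) (p : ℕ) :
    s * (1 + (p:ℝ)) ^ (s - 1) ≤ (1 + (p:ℝ)) ^ s - (p:ℝ) ^ s := by
  set u : ℝ := 1 + (p:ℝ) with hu
  have hu1 : (1:ℝ) ≤ u := by rw [hu]; have : (0:ℝ) ≤ (p:ℝ) := Nat.cast_nonneg p; linarith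
  have hu0 : (0:ℝ) < u := by positivity
  set t : ℝ := (p:ℝ) / u with ht
  have ht0 : 0 ≤ t := by positivity
  have htu : t * u = (p:ℝ) := div_mul_cancel₀ _ hu0.ne'
  have hbern : (1 + (t - 1)) ^ s ≤ 1 + s * (t - 1) :=
    rpow_one_add_le_one_add_mul_self (by linarith) hs0.le hs1
  have h1t : 1 - t = 1 / u := by
    field_simp [ht]
    linarith [htu, hu]
  have hts : t ^ s ≤ 1 - s / u := by
    have : (1 + (t - 1)) = t := by ring
    rw [this] at hbern
    have : s * (t - 1) = -(s * (1 - t)) := by ring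
    rw [this, h1t] at hbern
    calc t ^ s ≤ 1 + -(s * (1/u)) := hbern
      _ = 1 - s / u := by ring
  have hps : (p:ℝ) ^ s = t ^ s * u ^ s := by
    rw [← Real.mul_rpow ht0 hu0.le, htu]
  have hus : u ^ (s - 1) = u ^ s / u := Real.rpow_sub_one hu0.ne' s
  have hup : (0:ℝ) ≤ u ^ s := Real.rpow_nonneg hu0.le s
  rw [hps, hus]
  have := mul_le_mul_of_nonneg_right hts hup
  calc s * (u ^ s / u) = (s / u) * u ^ s := by ring
    _ ≤ (1 - t ^ s) * u ^ s := by nlinarith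
    _ = u ^ s - t ^ s * u ^ s := by ring

-- power sum bound for γ > -1
lemma sum_rpow_le {γ : ℝ} (hγ : -1 < γ) (x : ℕ) :
    ∑ p ∈ range (x+1), (1 + (p:ℝ)) ^ γ ≤ (1 + 1/(γ+1)) * (1 + (x:ℝ)) ^ (γ+1) := by
  have hx0 : (0:ℝ) < 1 + x := by positivity
  rcases le_or_gt 0 γ with h | h
  · have hbound : ∀ p ∈ range (x+1), (1 + (p:ℝ)) ^ γ ≤ (1 + (x:ℝ)) ^ γ := by
      intro p hp
      have hp' : (p:ℝ) ≤ x := by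
        exact_mod_cast Nat.lt_succ_iff.mp (mem_range.mp hp)
      exact Real.rpow_le_rpow (by positivity) (by linarith) h
    calc ∑ p ∈ range (x+1), (1 + (p:ℝ)) ^ γ ≤ ∑ _p ∈ range (x+1), (1 + (x:ℝ)) ^ γ :=
          Finset.sum_le_sum hbound
      _ = (x+1 : ℝ) * (1 + (x:ℝ)) ^ γ := by
          rw [Finset.sum_const, card_range]; norm_num
      _ = (1 + (x:ℝ)) ^ (γ+1) := by
          rw [Real.rpow_add hx0, Real.rpow_one]; ring
      _ ≤ (1 + 1/(γ+1)) * (1 + (x:ℝ)) ^ (γ+1) := by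
          have : (0:ℝ) < 1/(γ+1) := by positivity
          nlinarith [Real.rpow_nonneg hx0.le (γ+1)]
  · set s : ℝ := γ + 1 with hs
    have hs0 : 0 < s := by linarith
    have hs1 : s ≤ 1 := by linarith
    have hterm : ∀ p ∈ range (x+1), (1 + (p:ℝ)) ^ γ ≤ (((p+1:ℕ):ℝ) ^ s - ((p:ℕ):ℝ) ^ s) / s := by
      intro p _
      have := tele hs0 hs1 p
      have hγs : γ = s - 1 := by rw [hs]; ring
      rw [le_div_iff₀ hs0]
      push_cast
      calc (1 + (p:ℝ)) ^ γ * s = s * (1 + (p:ℝ)) ^ (s-1) := by rw [hγs]; ring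
        _ ≤ (1 + (p:ℝ)) ^ s - (p:ℝ) ^ s := this
        _ = ((p:ℝ)+1) ^ s - (p:ℝ) ^ s := by ring_nf
    calc ∑ p ∈ range (x+1), (1 + (p:ℝ)) ^ γ
        ≤ ∑ p ∈ range (x+1), ((((p+1:ℕ)):ℝ) ^ s - ((p:ℕ):ℝ) ^ s) / s :=
          Finset.sum_le_sum hterm
      _ = (∑ p ∈ range (x+1), ((((p+1:ℕ)):ℝ) ^ s - ((p:ℕ):ℝ) ^ s)) / s :=
          (Finset.sum_div _ _ _).symm
      _ = ((((x+1:ℕ)):ℝ) ^ s - ((0:ℕ):ℝ) ^ s) / s := by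
          rw [Finset.sum_range_sub (fun n : ℕ => ((n:ℝ)) ^ s)]
      _ = (1 + (x:ℝ)) ^ s / s := by
          push_cast
          rw [Real.zero_rpow hs0.ne']
          ring_nf
      _ ≤ (1 + 1/(γ+1)) * (1 + (x:ℝ)) ^ (γ+1) := by
          rw [← hs, div_eq_mul_inv]
          have h1 : (0:ℝ) ≤ (1 + (x:ℝ)) ^ s := Real.rpow_nonneg hx0.le s
          have h2 : s⁻¹ ≤ 1 + 1/s := by
            rw [one_div]
            nlinarith [mul_pos hs0 hs0]
          have : (1 + (x:ℝ)) ^ s * s⁻¹ ≤ (1 + (x:ℝ)) ^ s * (1 + 1/s) := by nlinarith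
          calc (1 + (x:ℝ)) ^ s * s⁻¹ ≤ (1 + (x:ℝ)) ^ s * (1 + 1/s) := this
            _ = (1 + 1/s) * (1 + (x:ℝ)) ^ s := by ring

-- harmonic-type sum bound
lemma sum_inv_le (x : ℕ) :
    ∑ p ∈ range (x+1), (1 + (p:ℝ)) ^ (-1 : ℝ) ≤ 3 * Real.log (2 + (x:ℝ)) := by
  have key : ∀ n : ℕ, ∑ p ∈ range (n+1), (1 + (p:ℝ)) ^ (-1 : ℝ) ≤ 1 + Real.log (1 + (n:ℝ)) := by
    intro n
    induction n with
    | zero => simp [Real.rpow_neg_one]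
    | succ k ih =>
      rw [Finset.sum_range_succ]
      have hstep : (1 + ((k+1:ℕ):ℝ)) ^ (-1:ℝ) ≤ Real.log (1 + ((k+1:ℕ):ℝ)) - Real.log (1 + (k:ℝ)) := by
        push_cast
        have h1 : (0:ℝ) < 1 + (k:ℝ) := by positivity
        have h2 : (0:ℝ) < 2 + (k:ℝ) := by positivity
        have h3 : Real.log ((1 + (k:ℝ)) / (2 + (k:ℝ))) ≤ (1 + (k:ℝ)) / (2 + (k:ℝ)) - 1 :=
          Real.log_le_sub_one_of_pos (by positivity)
        rw [Real.log_div h1.ne' h2.ne'] at h3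
        have h4 : (1 + (k:ℝ)) / (2 + (k:ℝ)) - 1 = -(1 / (2 + (k:ℝ))) := by
          field_simp
          norm_num
        rw [h4] at h3
        rw [Real.rpow_neg_one]
        have : (1 + ((k:ℝ)+1))⁻¹ = 1 / (2 + (k:ℝ)) := by
          rw [one_div]; ring_nf
        rw [this]
        have : (1:ℝ) + ((k:ℝ)+1) = 2 + (k:ℝ) := by ring
        rw [this]
        linarith
      push_cast at hstep ⊢
      linarith
  have hlog2 : (0.6931471803 : ℝ) < Real.log 2 := Real.log_two_gt_d9
  have h1 : Real.log 2 ≤ Real.log (2 + (x:ℝ)) := Real.log_le_log (by norm_num) (by have : (0:ℝ) ≤ (x:ℝ) := Nat.cast_nonneg x; linarith)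
  have h2 : Real.log (1 + (x:ℝ)) ≤ Real.log (2 + (x:ℝ)) := Real.log_le_log (by positivity) (by linarith)
  calc ∑ p ∈ range (x+1), (1 + (p:ℝ)) ^ (-1 : ℝ) ≤ 1 + Real.log (1 + (x:ℝ)) := key x
    _ ≤ 3 * Real.log (2 + (x:ℝ)) := by nlinarith


lemma conv_bound {α β : ℝ} (hα : -1 ≤ α) (hβ : -1 ≤ β) (x : ℕ) :
    ∑ p ∈ range (x+1), (1 + (x:ℝ) - (p:ℝ)) ^ α * (1 + (p:ℝ)) ^ β ≤
      2 * (1 + (x:ℝ)) ^ α * (∑ p ∈ range (x+1), (1 + (p:ℝ)) ^ β)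
      + 2 * (1 + (x:ℝ)) ^ β * (∑ p ∈ range (x+1), (1 + (p:ℝ)) ^ α) := by
  have hx0 : (0:ℝ) < 1 + x := by positivity
  have hterm : ∀ p ∈ range (x+1),
      (1 + (x:ℝ) - (p:ℝ)) ^ α * (1 + (p:ℝ)) ^ β ≤
        2 * (1 + (x:ℝ)) ^ α * (1 + (p:ℝ)) ^ β
        + 2 * (1 + (x:ℝ)) ^ β * (1 + (x:ℝ) - (p:ℝ)) ^ α := by
    intro p hp
    have hpx : (p:ℝ) ≤ x := by exact_mod_cast Nat.lt_succ_iff.mp (mem_range.mp hp)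
    have hp0 : (0:ℝ) ≤ (p:ℝ) := Nat.cast_nonneg p
    have hy0 : (0:ℝ) < 1 + (x:ℝ) - p := by linarith
    have hA : (0:ℝ) ≤ (1 + (x:ℝ) - p) ^ α := Real.rpow_nonneg hy0.le α
    have hB : (0:ℝ) ≤ (1 + (p:ℝ)) ^ β := Real.rpow_nonneg (by positivity) β
    have hC : (0:ℝ) ≤ (1 + (x:ℝ)) ^ α := Real.rpow_nonneg hx0.le α
    have hD : (0:ℝ) ≤ (1 + (x:ℝ)) ^ β := Real.rpow_nonneg hx0.le β
    rcases le_or_gt (2*(p:ℝ)) (x:ℝ) with h | h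
    · have h1 : (1 + (x:ℝ)) / 2 ≤ 1 + (x:ℝ) - p := by linarith
      have h2 : 1 + (x:ℝ) - p ≤ 1 + (x:ℝ) := by linarith
      have hh := half_rpow hα hx0 h1 h2
      nlinarith [mul_le_mul_of_nonneg_right hh hB, mul_nonneg hD hA]
    · have h1 : (1 + (x:ℝ)) / 2 ≤ 1 + (p:ℝ) := by linarith
      have h2 : 1 + (p:ℝ) ≤ 1 + (x:ℝ) := by linarith
      have hh := half_rpow hβ hx0 h1 h2
      nlinarith [mul_le_mul_of_nonneg_left hh hA, mul_nonneg hC hB]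
  have hreflect : ∑ p ∈ range (x+1), (1 + (x:ℝ) - (p:ℝ)) ^ α
      = ∑ p ∈ range (x+1), (1 + (p:ℝ)) ^ α := by
    rw [← Finset.sum_range_reflect (fun j : ℕ => (1 + (j:ℝ)) ^ α) (x+1)]
    apply Finset.sum_congr rfl
    intro p hp
    have hpx : p ≤ x := Nat.lt_succ_iff.mp (mem_range.mp hp)
    have h1 : x + 1 - 1 - p = x - p := by omega
    have h2 : ((x - p : ℕ) : ℝ) = (x:ℝ) - p := by
      rw [Nat.cast_sub hpx]
    simp only [h1, h2]
    ring_nf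
  calc ∑ p ∈ range (x+1), (1 + (x:ℝ) - (p:ℝ)) ^ α * (1 + (p:ℝ)) ^ β
      ≤ ∑ p ∈ range (x+1), (2 * (1 + (x:ℝ)) ^ α * (1 + (p:ℝ)) ^ β
          + 2 * (1 + (x:ℝ)) ^ β * (1 + (x:ℝ) - (p:ℝ)) ^ α) :=
        Finset.sum_le_sum hterm
    _ = 2 * (1 + (x:ℝ)) ^ α * (∑ p ∈ range (x+1), (1 + (p:ℝ)) ^ β)
        + 2 * (1 + (x:ℝ)) ^ β * (∑ p ∈ range (x+1), (1 + (x:ℝ) - (p:ℝ)) ^ α) := by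
        rw [Finset.sum_add_distrib, ← Finset.mul_sum, ← Finset.mul_sum]
    _ = _ := by rw [hreflect]

theorem stmt0 (m : ℕ) (hm : 0 < m) (a : ℝ) (ha1 : 1 ≤ a) (ha2 : a ≤ 2 * m) :
    ∃ C : ℝ, 0 < C ∧ ∀ x : ℕ,
      ((a ≠ 1 ∧ a ≠ 2 * m) →
        (∑ p ∈ Finset.range (x + 1),
            (1 + (x : ℝ) - (p : ℝ)) ^ (a - 2) * (1 + (p : ℝ)) ^ ((m : ℝ) - a / 2 - 1))
          ≤ C * (1 + (x : ℝ)) ^ ((m : ℝ) + a / 2 - 2)) ∧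
      ((a = 1 ∨ a = 2 * m) →
        (∑ p ∈ Finset.range (x + 1),
            (1 + (x : ℝ) - (p : ℝ)) ^ (a - 2) * (1 + (p : ℝ)) ^ ((m : ℝ) - a / 2 - 1))
          ≤ C * (1 + (x : ℝ)) ^ ((m : ℝ) + a / 2 - 2) * Real.log (2 + (x : ℝ))) := by
  have hm1 : (1:ℝ) ≤ (m:ℝ) := by exact_mod_cast hm
  have hlog2 : (0.6931471803 : ℝ) < Real.log 2 := Real.log_two_gt_d9
  by_cases hA : a = 1
  · -- a = 1 : α = -1, β = m - 3/2
    subst hA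
    have hne2m : (1:ℝ) ≠ 2 * m := by
      intro h; nlinarith
    set β : ℝ := (m:ℝ) - 1/2 - 1 with hβdef
    have hβ' : -1 < β := by rw [hβdef]; linarith
    have hCβ : (0:ℝ) < 1 + 1/(β+1) := by
      have : (0:ℝ) < β + 1 := by linarith
      positivity
    refine ⟨4 * (1 + 1/(β+1)) + 6, by linarith, fun x => ?_⟩
    constructor
    · rintro ⟨h1, _⟩; exact absurd rfl h1
    · intro _
      have hx0 : (0:ℝ) < 1 + x := by positivity
      have hlogx : Real.log 2 ≤ Real.log (2 + (x:ℝ)) :=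
        Real.log_le_log (by norm_num) (by have : (0:ℝ) ≤ (x:ℝ) := Nat.cast_nonneg x; linarith)
      have hE : (1:ℝ) - 2 = (-1:ℝ) := by norm_num
      have hT : (m:ℝ) + 1/2 - 2 = β := by rw [hβdef]; ring
      rw [hE, hT]
      have h1 := conv_bound (α := (-1:ℝ)) (β := β) (by norm_num) (by linarith) x
      have h2 := sum_rpow_le hβ' x
      have h3 := sum_inv_le x
      have hXα : (0:ℝ) ≤ (1 + (x:ℝ)) ^ (-1:ℝ) := Real.rpow_nonneg hx0.le _
      have hXβ : (0:ℝ) ≤ (1 + (x:ℝ)) ^ β := Real.rpow_nonneg hx0.le β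
      have e1 : (1 + (x:ℝ)) ^ (-1:ℝ) * (1 + (x:ℝ)) ^ (β+1) = (1 + (x:ℝ)) ^ β := by
        rw [← Real.rpow_add hx0]; congr 1; ring
      have hlogpos : (1:ℝ)/2 < Real.log (2 + (x:ℝ)) := by linarith
      calc ∑ p ∈ Finset.range (x+1), (1 + (x:ℝ) - (p:ℝ)) ^ (-1:ℝ) * (1 + (p:ℝ)) ^ β
          ≤ 2 * (1 + (x:ℝ)) ^ (-1:ℝ) * (∑ p ∈ Finset.range (x+1), (1 + (p:ℝ)) ^ β)
            + 2 * (1 + (x:ℝ)) ^ β * (∑ p ∈ Finset.range (x+1), (1 + (p:ℝ)) ^ (-1:ℝ)) := h1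
        _ ≤ 2 * (1 + (x:ℝ)) ^ (-1:ℝ) * ((1 + 1/(β+1)) * (1 + (x:ℝ)) ^ (β+1))
            + 2 * (1 + (x:ℝ)) ^ β * (3 * Real.log (2 + (x:ℝ))) := by
            have s1 : (0:ℝ) ≤ ∑ p ∈ Finset.range (x+1), (1 + (p:ℝ)) ^ β :=
              Finset.sum_nonneg fun p _ => Real.rpow_nonneg (by positivity) β
            gcongr
        _ = 2 * (1 + 1/(β+1)) * ((1 + (x:ℝ)) ^ (-1:ℝ) * (1 + (x:ℝ)) ^ (β+1))
            + 6 * (1 + (x:ℝ)) ^ β * Real.log (2 + (x:ℝ)) := by ring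
        _ = 2 * (1 + 1/(β+1)) * (1 + (x:ℝ)) ^ β
            + 6 * (1 + (x:ℝ)) ^ β * Real.log (2 + (x:ℝ)) := by rw [e1]
        _ ≤ (4 * (1 + 1/(β+1)) + 6) * (1 + (x:ℝ)) ^ β * Real.log (2 + (x:ℝ)) := by
            nlinarith [mul_nonneg hXβ (le_trans (by norm_num) hlogpos.le), mul_pos hCβ (lt_trans (by norm_num) hlogpos), mul_le_mul_of_nonneg_left hlogpos.le (mul_nonneg (by linarith : (0:ℝ) ≤ 4*(1+1/(β+1))) hXβ)]
  · by_cases hB : a = 2 * m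
    · -- a = 2m : α = 2m - 2, β = -1
      subst hB
      set α : ℝ := 2 * (m:ℝ) - 2 with hαdef
      have hα' : -1 < α := by rw [hαdef]; linarith
      have hCα : (0:ℝ) < 1 + 1/(α+1) := by
        have : (0:ℝ) < α + 1 := by linarith
        positivity
      refine ⟨6 + 4 * (1 + 1/(α+1)), by linarith, fun x => ?_⟩
      constructor
      · rintro ⟨_, h2⟩; exact absurd rfl h2
      · intro _
        have hx0 : (0:ℝ) < 1 + x := by positivity
        have hlogx : Real.log 2 ≤ Real.log (2 + (x:ℝ)) :=
          Real.log_le_log (by norm_num) (by have : (0:ℝ) ≤ (x:ℝ) := Nat.cast_nonneg x; linarith)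
        have hlogpos : (1:ℝ)/2 < Real.log (2 + (x:ℝ)) := by linarith
        have hE : (m:ℝ) - 2 * (m:ℝ) / 2 - 1 = (-1:ℝ) := by ring
        have hT : (m:ℝ) + 2 * (m:ℝ) / 2 - 2 = α := by rw [hαdef]; ring
        rw [hE, hT]
        have h1 := conv_bound (α := α) (β := (-1:ℝ)) (by linarith) (by norm_num) x
        have h2 := sum_rpow_le hα' x
        have h3 := sum_inv_le x
        have hXα : (0:ℝ) ≤ (1 + (x:ℝ)) ^ α := Real.rpow_nonneg hx0.le α
        have hXβ : (0:ℝ) ≤ (1 + (x:ℝ)) ^ (-1:ℝ) := Real.rpow_nonneg hx0.le _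
        have e1 : (1 + (x:ℝ)) ^ (-1:ℝ) * (1 + (x:ℝ)) ^ (α+1) = (1 + (x:ℝ)) ^ α := by
          rw [← Real.rpow_add hx0]; congr 1; ring
        calc ∑ p ∈ Finset.range (x+1), (1 + (x:ℝ) - (p:ℝ)) ^ α * (1 + (p:ℝ)) ^ (-1:ℝ)
            ≤ 2 * (1 + (x:ℝ)) ^ α * (∑ p ∈ Finset.range (x+1), (1 + (p:ℝ)) ^ (-1:ℝ))
              + 2 * (1 + (x:ℝ)) ^ (-1:ℝ) * (∑ p ∈ Finset.range (x+1), (1 + (p:ℝ)) ^ α) := h1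
          _ ≤ 2 * (1 + (x:ℝ)) ^ α * (3 * Real.log (2 + (x:ℝ)))
              + 2 * (1 + (x:ℝ)) ^ (-1:ℝ) * ((1 + 1/(α+1)) * (1 + (x:ℝ)) ^ (α+1)) := by
              have s1 : (0:ℝ) ≤ ∑ p ∈ Finset.range (x+1), (1 + (p:ℝ)) ^ α :=
                Finset.sum_nonneg fun p _ => Real.rpow_nonneg (by positivity) α
              gcongr
          _ = 6 * (1 + (x:ℝ)) ^ α * Real.log (2 + (x:ℝ))
              + 2 * (1 + 1/(α+1)) * ((1 + (x:ℝ)) ^ (-1:ℝ) * (1 + (x:ℝ)) ^ (α+1)) := by ring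
          _ = 6 * (1 + (x:ℝ)) ^ α * Real.log (2 + (x:ℝ))
              + 2 * (1 + 1/(α+1)) * (1 + (x:ℝ)) ^ α := by rw [e1]
          _ ≤ (6 + 4 * (1 + 1/(α+1))) * (1 + (x:ℝ)) ^ α * Real.log (2 + (x:ℝ)) := by
              nlinarith [mul_nonneg hXα (le_trans (by norm_num) hlogpos.le), mul_pos hCα (lt_trans (by norm_num) hlogpos), mul_le_mul_of_nonneg_left hlogpos.le (mul_nonneg (by linarith : (0:ℝ) ≤ 4*(1+1/(α+1))) hXα)]
    · -- generic case
      have ha1' : 1 < a := lt_of_le_of_ne ha1 (fun h => hA h.symm)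
      have ha2' : a < 2 * m := lt_of_le_of_ne ha2 hB
      set α : ℝ := a - 2 with hαdef
      set β : ℝ := (m:ℝ) - a/2 - 1 with hβdef
      have hα' : -1 < α := by rw [hαdef]; linarith
      have hβ' : -1 < β := by rw [hβdef]; linarith
      have hCα : (0:ℝ) < 1 + 1/(α+1) := by
        have : (0:ℝ) < α + 1 := by linarith
        positivity
      have hCβ : (0:ℝ) < 1 + 1/(β+1) := by
        have : (0:ℝ) < β + 1 := by linarith
        positivity
      refine ⟨2 * (1 + 1/(β+1)) + 2 * (1 + 1/(α+1)), by linarith, fun x => ?_⟩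
      constructor
      · intro _
        have hx0 : (0:ℝ) < 1 + x := by positivity
        have h1 := conv_bound (α := α) (β := β) hα'.le hβ'.le x
        have h2 := sum_rpow_le hβ' x
        have h3 := sum_rpow_le hα' x
        have hXα : (0:ℝ) ≤ (1 + (x:ℝ)) ^ α := Real.rpow_nonneg hx0.le α
        have hXβ : (0:ℝ) ≤ (1 + (x:ℝ)) ^ β := Real.rpow_nonneg hx0.le β
        have e1 : (1 + (x:ℝ)) ^ α * (1 + (x:ℝ)) ^ (β+1) = (1 + (x:ℝ)) ^ ((m:ℝ) + a/2 - 2) := by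
          rw [← Real.rpow_add hx0]; congr 1; rw [hαdef, hβdef]; ring
        have e2 : (1 + (x:ℝ)) ^ β * (1 + (x:ℝ)) ^ (α+1) = (1 + (x:ℝ)) ^ ((m:ℝ) + a/2 - 2) := by
          rw [← Real.rpow_add hx0]; congr 1; rw [hαdef, hβdef]; ring
        calc ∑ p ∈ Finset.range (x+1), (1 + (x:ℝ) - (p:ℝ)) ^ α * (1 + (p:ℝ)) ^ β
            ≤ 2 * (1 + (x:ℝ)) ^ α * (∑ p ∈ Finset.range (x+1), (1 + (p:ℝ)) ^ β)
              + 2 * (1 + (x:ℝ)) ^ β * (∑ p ∈ Finset.range (x+1), (1 + (p:ℝ)) ^ α) := h1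
          _ ≤ 2 * (1 + (x:ℝ)) ^ α * ((1 + 1/(β+1)) * (1 + (x:ℝ)) ^ (β+1))
              + 2 * (1 + (x:ℝ)) ^ β * ((1 + 1/(α+1)) * (1 + (x:ℝ)) ^ (α+1)) := by gcongr
          _ = 2 * (1 + 1/(β+1)) * ((1 + (x:ℝ)) ^ α * (1 + (x:ℝ)) ^ (β+1))
              + 2 * (1 + 1/(α+1)) * ((1 + (x:ℝ)) ^ β * (1 + (x:ℝ)) ^ (α+1)) := by ring
          _ = (2 * (1 + 1/(β+1)) + 2 * (1 + 1/(α+1))) * (1 + (x:ℝ)) ^ ((m:ℝ) + a/2 - 2) := by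
              rw [e1, e2]; ring
      · rintro (h | h)
        · exact absurd h hA
        · exact absurd h hB
end

section
/- Let k, l ∈ ℕ₀, let m be a positive integer, and let a ∈ ℂ with 0 < Re(a) < m. Then ∫₀^∞ L_k^{m−1}(t) L_l^{m−1}(t) e^{−t} t^{m−1−a} dt = Γ(a)^{−2} ∑_{p=0}^{min{k,l}} [Γ(a+k−p)/(k−p)!] · [Γ(a+l−p)/(l−p)!] · [Γ(p+m−a)/p!], where t^{m−1−a} := exp((m−1−a) log t) for t > 0 and Γ is the complex Gamma function. -/
open MeasureTheory

/-- Generalized binomial coefficient `C(t, j) = t(t-1)⋯(t-j+1)/j!`. -/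
noncomputable def genChoose (t : ℝ) (j : ℕ) : ℝ :=
  (∏ i ∈ Finset.range j, (t - (i : ℝ))) / (Nat.factorial j : ℝ)

/-- Laguerre polynomial `L_k^γ(x) = ∑_{j=0}^k (-1)^j C(k+γ, k-j) x^j / j!`. -/
noncomputable def laguerre (γ : ℝ) (k : ℕ) (x : ℝ) : ℝ :=
  ∑ j ∈ Finset.range (k + 1),
    (-1 : ℝ) ^ j * genChoose ((k : ℝ) + γ) (k - j) * x ^ j / (Nat.factorial j : ℝ)

open Finset



noncomputable def cchoose (t : ℂ) (j : ℕ) : ℂ :=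
  (∏ i ∈ Finset.range j, (t - (i : ℂ))) / (Nat.factorial j : ℂ)

lemma myCastProd {R : Type*} [CommRing R] (n j : ℕ) :
    (∏ i ∈ range j, ((n : R) - (i : R))) = (n.descFactorial j : R) := by
  induction j with
  | zero => simp
  | succ j ih =>
    rw [Finset.prod_range_succ, ih, Nat.descFactorial_succ]
    rcases le_or_gt j n with h | h
    · push_cast [Nat.cast_sub h]
      ring
    · have h0 : n.descFactorial j = 0 := by
        rw [Nat.descFactorial_eq_zero_iff_lt]; omega
      simp [h0]

lemma cchoose_natCast (n j : ℕ) : cchoose (n : ℂ) j = (n.choose j : ℂ) := by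
  rw [cchoose, myCastProd, Nat.descFactorial_eq_factorial_mul_choose]
  push_cast
  rw [mul_comm, mul_div_assoc, div_self (by exact_mod_cast j.factorial_ne_zero), mul_one]

lemma cchoose_succ_succ (t : ℂ) (n : ℕ) :
    cchoose (t + 1) (n + 1) = cchoose t (n + 1) + cchoose t n := by
  have key : (∏ i ∈ range (n+1), (t + 1 - (i:ℂ)))
      = (∏ i ∈ range n, (t - (i:ℂ))) * (t + 1) := by
    rw [Finset.prod_range_succ']
    have : ∀ i ∈ range n, (t + 1 - (((i+1) : ℕ):ℂ)) = t - (i:ℂ) := by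
      intro i _; push_cast; ring
    rw [Finset.prod_congr rfl this]
    norm_num
  have h2 : ((n).factorial : ℂ) ≠ 0 := by exact_mod_cast (n).factorial_ne_zero
  have h3 : ((n:ℂ) + 1) ≠ 0 := Nat.cast_add_one_ne_zero n
  rw [cchoose, cchoose, cchoose, key, Finset.prod_range_succ]
  rw [Nat.factorial_succ]
  push_cast
  field_simp
  ring

lemma cchoose_vandermonde (x : ℂ) (v : ℕ) :
    ∀ n : ℕ, ∑ i ∈ range (n+1), cchoose x i * ((v.choose (n - i)) : ℂ)
      = cchoose (x + (v : ℂ)) n := by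
  induction v with
  | zero =>
    intro n
    rw [Finset.sum_range_succ]
    have : ∀ i ∈ range n, cchoose x i * (((0:ℕ).choose (n - i)) : ℂ) = 0 := by
      intro i hi
      rw [Finset.mem_range] at hi
      rw [Nat.choose_eq_zero_of_lt (by omega)]
      simp
    rw [Finset.sum_congr rfl this]
    simp
  | succ v ih =>
    intro n
    match n with
    | 0 => simp [cchoose]
    | n+1 =>
      rw [Finset.sum_range_succ]
      have split : ∀ i ∈ range (n+1),
          cchoose x i * (((v+1).choose (n + 1 - i)) : ℂ)
          = cchoose x i * ((v.choose (n + 1 - i)) : ℂ)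
            + cchoose x i * ((v.choose (n - i)) : ℂ) := by
        intro i hi
        rw [Finset.mem_range] at hi
        have h : n + 1 - i = (n - i) + 1 := by omega
        have hnat : (v+1).choose (n+1-i) = v.choose (n-i) + v.choose (n+1-i) := by
          rw [h, Nat.choose_succ_succ]
        rw [hnat, Nat.cast_add]
        ring
      rw [Finset.sum_congr rfl split, Finset.sum_add_distrib]
      have e1 : ∑ i ∈ range (n+1), cchoose x i * ((v.choose (n + 1 - i)) : ℂ)
          = cchoose (x + (v:ℂ)) (n+1) - cchoose x (n+1) := by
        have h := ih (n+1)
        rw [Finset.sum_range_succ] at h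
        simp only [Nat.sub_self, Nat.choose_zero_right, Nat.cast_one, mul_one] at h
        exact eq_sub_of_add_eq h
      rw [e1, ih n, Nat.sub_self, Nat.choose_zero_right]
      have hc : x + (((v+1) : ℕ):ℂ) = (x + v) + 1 := by push_cast; ring
      rw [hc, cchoose_succ_succ]
      push_cast
      ring

lemma cchoose_merge (x : ℂ) (j q : ℕ) :
    cchoose x j * cchoose (x - (j:ℂ)) q = cchoose x (j+q) * (((j+q).choose j) : ℂ) := by
  have hfac : (((j+q).choose j : ℕ) : ℂ) * (j.factorial : ℂ) * (q.factorial : ℂ)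
      = ((j+q).factorial : ℂ) := by
    rw [Nat.choose_symm_add]
    exact_mod_cast congrArg (Nat.cast : ℕ → ℂ) (Nat.add_choose_mul_factorial_mul_factorial j q)
  have hprod : ∏ i ∈ range q, (x - (j:ℂ) - (i:ℂ)) = ∏ i ∈ range q, (x - (((j + i) : ℕ) : ℂ)) := by
    apply Finset.prod_congr rfl; intro i _; push_cast; ring
  have h1 : (j.factorial : ℂ) ≠ 0 := by exact_mod_cast j.factorial_ne_zero
  have h2 : (q.factorial : ℂ) ≠ 0 := by exact_mod_cast q.factorial_ne_zero
  have h3 : ((j+q).factorial : ℂ) ≠ 0 := by exact_mod_cast (j+q).factorial_ne_zero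
  rw [cchoose, cchoose, cchoose, Finset.prod_range_add, hprod]
  field_simp
  rw [← hfac]
  ring

lemma altsum : ∀ (u : ℕ), ∀ (K M : ℕ), u ≤ K → u ≤ M →
    ∑ p ∈ range (u+1), ((-1:ℂ))^p * ((u.choose p) : ℂ) * (((M-p).choose K) : ℂ)
      = (((M-u).choose (K-u)) : ℂ) := by
  intro u
  induction u with
  | zero => intro K M _ _; simp
  | succ u ih =>
    intro K M hK hM
    have hK' : u ≤ K := by omega
    have hM' : u ≤ M := by omega
    have hM1 : u ≤ M - 1 := by omega
    have e0 : ∑ p ∈ range (u+1+1), ((-1:ℂ))^p * (((u+1).choose p) : ℂ) * (((M-p).choose K) : ℂ)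
        = (∑ p ∈ range (u+1), ((-1:ℂ))^(p+1) * (((u+1).choose (p+1)) : ℂ) * (((M-(p+1)).choose K) : ℂ))
          + ((M.choose K) : ℂ) := by
      rw [Finset.sum_range_succ']
      simp
    have e1 : ∀ p ∈ range (u+1),
        ((-1:ℂ))^(p+1) * (((u+1).choose (p+1)) : ℂ) * (((M-(p+1)).choose K) : ℂ)
        = -(((-1:ℂ))^p * ((u.choose p) : ℂ) * ((((M-1)-p).choose K) : ℂ))
          + ((-1:ℂ))^(p+1) * ((u.choose (p+1)) : ℂ) * (((M-(p+1)).choose K) : ℂ) := by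
      intro p _
      have hh : M - (p+1) = M - 1 - p := by omega
      rw [Nat.choose_succ_succ, hh]
      push_cast
      ring
    have e2 : ∑ p ∈ range (u+1), ((-1:ℂ))^(p+1) * ((u.choose (p+1)) : ℂ) * (((M-(p+1)).choose K) : ℂ)
        = (∑ p ∈ range (u+1), ((-1:ℂ))^p * ((u.choose p) : ℂ) * (((M-p).choose K) : ℂ))
          - ((M.choose K) : ℂ) := by
      have h := Finset.sum_range_succ'
        (fun p => ((-1:ℂ))^p * ((u.choose p) : ℂ) * (((M-p).choose K) : ℂ)) (u+1)
      have h2 : ∑ p ∈ range (u+1+1), ((-1:ℂ))^p * ((u.choose p) : ℂ) * (((M-p).choose K) : ℂ)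
          = ∑ p ∈ range (u+1), ((-1:ℂ))^p * ((u.choose p) : ℂ) * (((M-p).choose K) : ℂ) := by
        rw [Finset.sum_range_succ, Nat.choose_succ_self]
        simp
      rw [h2] at h
      simp only [pow_zero, Nat.choose_zero_right, Nat.cast_one, one_mul, Nat.sub_zero, mul_one] at h
      exact eq_sub_of_add_eq h.symm
    rw [e0, Finset.sum_congr rfl e1, Finset.sum_add_distrib, e2, Finset.sum_neg_distrib]
    rw [ih K M hK' hM', ih K (M-1) hK' hM1]
    have pas : ((M-u).choose (K-u)) = ((M-u-1).choose (K-u-1)) + ((M-u-1).choose (K-u)) := by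
      rw [show M-u = (M-u-1)+1 by omega, show K-u = (K-u-1)+1 by omega, Nat.choose_succ_succ]
      congr 1 <;> congr 1 <;> omega
    have h3 : M - (u+1) = M - u - 1 := by omega
    have h4 : K - (u+1) = K - u - 1 := by omega
    have h5 : M - 1 - u = M - u - 1 := by omega
    rw [h3, h4, h5, pas]
    push_cast
    ring

lemma Gamma_shift (z : ℂ) (hz : 0 < z.re) (n : ℕ) :
    Complex.Gamma (z + n) = (∏ r ∈ range n, (z + r)) * Complex.Gamma z := by
  induction n with
  | zero => simp
  | succ n ih =>
    have hne : z + n ≠ 0 := by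
      intro h
      have : (z + n).re = 0 := by rw [h]; simp
      simp only [Complex.add_re, Complex.natCast_re] at this
      have : (0:ℝ) ≤ (n:ℝ) := by positivity
      nlinarith [Complex.add_re z n]
    have : z + ((n+1 : ℕ) : ℂ) = (z + n) + 1 := by push_cast; ring
    rw [this, Complex.Gamma_add_one _ hne, ih, Finset.prod_range_succ]
    ring

lemma sumshift (f : ℕ → ℂ) (p n : ℕ) (h : ∀ u, u < p → f u = 0) :
    ∑ q ∈ range n, f (p + q) = ∑ u ∈ range (p + n), f u := by
  rw [Finset.sum_range_add]
  rw [Finset.sum_eq_zero (fun u hu => h u (Finset.mem_range.mp hu))]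
  ring

lemma extendsum (f : ℕ → ℂ) (n N : ℕ) (hn : n ≤ N) (h : ∀ u, n ≤ u → f u = 0) :
    ∑ u ∈ range n, f u = ∑ u ∈ range N, f u := by
  apply Finset.sum_subset (Finset.range_subset_range.mpr hn)
  intro u _ hu
  exact h u (by simpa using hu)

lemma hsym (c n i : ℕ) (h : i ≤ n) : (c+n).choose (n-i) = (c+n).choose (c+i) := by
  rw [show n - i = (c+n) - (c+i) by omega]
  exact Nat.choose_symm (by omega)

lemma lhs_fiber (x : ℂ) (c k l : ℕ) :
    ∑ i ∈ range (k+1), ∑ j ∈ range (l+1),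
      cchoose x (i+j) * (((i+j).choose i) : ℂ) * (((c+k).choose (k-i)) : ℂ)
        * (((c+l).choose (l-j)) : ℂ)
    = ∑ s ∈ range (k+l+1), cchoose x s *
        ∑ u ∈ range (s+1), ((s.choose u) : ℂ) * (((c+k).choose (c+u)) : ℂ)
          * (((c+l).choose (c+(s-u))) : ℂ) := by
  set T := k + l + 1 with hT
  set f : ℕ → ℕ → ℂ := fun s u => cchoose x s * ((s.choose u) : ℂ)
    * (((c+k).choose (c+u)) : ℂ) * (((c+l).choose (c+(s-u))) : ℂ) with hf
  have hfzero : ∀ s u, T ≤ s → f s u = 0 := by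
    intro s u hs
    rcases le_or_gt u k with h1 | h1
    · rcases le_or_gt u s with h2 | h2
      · have : (c+l) < c + (s - u) := by omega
        simp [hf, Nat.choose_eq_zero_of_lt this]
      · simp [hf, Nat.choose_eq_zero_of_lt h2]
    · have : (c+k) < c + u := by omega
      simp [hf, Nat.choose_eq_zero_of_lt this]
  have step1 : ∀ i ∈ range (k+1), ∀ j ∈ range (l+1),
      cchoose x (i+j) * (((i+j).choose i) : ℂ) * (((c+k).choose (k-i)) : ℂ)
        * (((c+l).choose (l-j)) : ℂ) = f (i+j) i := by
    intro i hi j hj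
    rw [Finset.mem_range] at hi hj
    rw [hf]
    simp only []
    rw [hsym c k i (by omega), hsym c l j (by omega), show (i+j) - i = j by omega]
  calc ∑ i ∈ range (k+1), ∑ j ∈ range (l+1),
      cchoose x (i+j) * (((i+j).choose i) : ℂ) * (((c+k).choose (k-i)) : ℂ)
        * (((c+l).choose (l-j)) : ℂ)
      = ∑ i ∈ range (k+1), ∑ j ∈ range (l+1), f (i+j) i := by
        apply Finset.sum_congr rfl
        intro i hi
        exact Finset.sum_congr rfl (fun j hj => step1 i hi j hj)
    _ = ∑ i ∈ range T, ∑ j ∈ range T, f (i+j) i := by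
        rw [extendsum (fun i => ∑ j ∈ range (l+1), f (i+j) i) (k+1) T (by omega)]
        · apply Finset.sum_congr rfl
          intro i _
          apply extendsum
          · omega
          · intro j hj
            rcases le_or_gt i k with h2 | h2
            · have hz : (c + l).choose (c + j) = 0 :=
                Nat.choose_eq_zero_of_lt (by omega)
              simp [hf, hz]
            · have hz : (c + k).choose (c + i) = 0 :=
                Nat.choose_eq_zero_of_lt (by omega)
              simp [hf, hz]
        · intro i hi
          apply Finset.sum_eq_zero
          intro j _
          have : (c+k) < c + i := by omega
          simp [hf, Nat.choose_eq_zero_of_lt this]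
    _ = ∑ i ∈ range T, ∑ s ∈ range T, f s i := by
        apply Finset.sum_congr rfl
        intro i _
        rw [sumshift (fun s => f s i) i T
          (fun u hu => by simp [hf, Nat.choose_eq_zero_of_lt hu])]
        exact (extendsum (fun s => f s i) T (i + T) (by omega)
          (fun s hs => hfzero s i hs)).symm
    _ = ∑ s ∈ range T, ∑ i ∈ range T, f s i := Finset.sum_comm
    _ = ∑ s ∈ range T, cchoose x s *
        ∑ u ∈ range (s+1), ((s.choose u) : ℂ) * (((c+k).choose (c+u)) : ℂ)
          * (((c+l).choose (c+(s-u))) : ℂ) := by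
        apply Finset.sum_congr rfl
        intro s hs
        rw [Finset.mem_range] at hs
        have e := extendsum (fun u => f s u) (s+1) T (by omega)
          (fun u hu => by
            have hz : s.choose u = 0 := Nat.choose_eq_zero_of_lt (by omega)
            simp [hf, hz])
        rw [← e, Finset.mul_sum]
        apply Finset.sum_congr rfl
        intro u _
        rw [hf]
        ring

lemma rhs_fiber (x : ℂ) (c k l : ℕ) (hkl : k ≤ l) :
    ∑ p ∈ range (k+1), (-1:ℂ)^p * cchoose x p
        * cchoose (x + (((c+k) : ℕ) : ℂ) - (p:ℂ)) (k-p)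
        * cchoose (x + (((c+l) : ℕ) : ℂ) - (p:ℂ)) (l-p)
    = ∑ s ∈ range (k+l+1), cchoose x s *
        ∑ u ∈ range (s+1), ((s.choose u) : ℂ) * (((c+k).choose (c+u)) : ℂ)
          * (((c+l).choose (c+(s-u))) : ℂ) := by
  -- step 1: expand each p-term into a double sum over (u, s)
  have step1 : ∀ p ∈ range (k+1),
      (-1:ℂ)^p * cchoose x p
        * cchoose (x + (((c+k) : ℕ) : ℂ) - (p:ℂ)) (k-p)
        * cchoose (x + (((c+l) : ℕ) : ℂ) - (p:ℂ)) (l-p)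
      = ∑ u ∈ range (k+1), ∑ s ∈ range (k+l+1),
          (-1:ℂ)^p * cchoose x s * ((s.choose u) : ℂ) * ((u.choose p) : ℂ)
            * (((c+k).choose (c+u)) : ℂ) * (((c+(l+(u-p))).choose (c+s)) : ℂ) := by
    intro p hp
    rw [Finset.mem_range] at hp
    have hp' : p ≤ k := by omega
    have v1 : cchoose (x + (((c+k) : ℕ) : ℂ) - (p:ℂ)) (k-p)
        = ∑ q ∈ range (k-p+1), cchoose (x - (p:ℂ)) q * (((c+k).choose (k-p-q)) : ℂ) := by
      have h := cchoose_vandermonde (x - (p:ℂ)) (c+k) (k-p)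
      rw [show (x - (p:ℂ)) + (((c+k):ℕ):ℂ) = x + (((c+k):ℕ):ℂ) - (p:ℂ) by ring] at h
      exact h.symm
    -- expand to triple sum
    have tri : (-1:ℂ)^p * cchoose x p
        * cchoose (x + (((c+k) : ℕ) : ℂ) - (p:ℂ)) (k-p)
        * cchoose (x + (((c+l) : ℕ) : ℂ) - (p:ℂ)) (l-p)
        = ∑ q ∈ range (k-p+1), ∑ r ∈ range (l-p+1),
            (-1:ℂ)^p * cchoose x (p+q+r) * (((p+q+r).choose (p+q)) : ℂ)
              * (((p+q).choose p) : ℂ) * (((c+k).choose (c+(p+q))) : ℂ)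
              * (((c+(l+q)).choose (c+(p+q+r))) : ℂ) := by
      rw [v1, Finset.mul_sum, Finset.sum_mul]
      apply Finset.sum_congr rfl
      intro q hq
      rw [Finset.mem_range] at hq
      have v2 : cchoose (x + (((c+l) : ℕ) : ℂ) - (p:ℂ)) (l-p)
          = ∑ r ∈ range (l-p+1), cchoose (x - (p:ℂ) - (q:ℂ)) r
              * (((c+l+q).choose (l-p-r)) : ℂ) := by
        have h := cchoose_vandermonde (x - (p:ℂ) - (q:ℂ)) (c+l+q) (l-p)
        rw [show (x - (p:ℂ) - (q:ℂ)) + (((c+l+q):ℕ):ℂ)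
            = x + (((c+l):ℕ):ℂ) - (p:ℂ) by push_cast; ring] at h
        exact h.symm
      rw [v2, Finset.mul_sum]
      apply Finset.sum_congr rfl
      intro r hr
      rw [Finset.mem_range] at hr
      have m1 := cchoose_merge x p q
      have m2 := cchoose_merge x (p+q) r
      have m3 : cchoose x p * cchoose (x - (p:ℂ)) q * cchoose (x - (p:ℂ) - (q:ℂ)) r
          = cchoose x (p+q+r) * (((p+q+r).choose (p+q)) : ℂ) * (((p+q).choose p) : ℂ) := by
        rw [show x - (p:ℂ) - (q:ℂ) = x - (((p+q:ℕ)):ℂ) by push_cast; ring, m1,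
          mul_right_comm, m2]
      have n1 : (c+k).choose (k-p-q) = (c+k).choose (c+(p+q)) := by
        rw [show k-p-q = k - (p+q) by omega]
        exact hsym c k (p+q) (by omega)
      have n2 : (c+l+q).choose (l-p-r) = (c+(l+q)).choose (c+(p+q+r)) := by
        rw [show c+l+q = c+(l+q) by omega, show l-p-r = (l+q) - (p+q+r) by omega]
        exact hsym c (l+q) (p+q+r) (by omega)
      rw [n1, n2]
      linear_combination ((-1:ℂ)^p * (((c+k).choose (c+(p+q))) : ℂ)
        * (((c+(l+q)).choose (c+(p+q+r))) : ℂ)) * m3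
    rw [tri]
    -- now shift r -> s and q -> u
    have inner_q : ∀ q ∈ range (k-p+1),
        ∑ r ∈ range (l-p+1),
            (-1:ℂ)^p * cchoose x (p+q+r) * (((p+q+r).choose (p+q)) : ℂ)
              * (((p+q).choose p) : ℂ) * (((c+k).choose (c+(p+q))) : ℂ)
              * (((c+(l+q)).choose (c+(p+q+r))) : ℂ)
        = ∑ s ∈ range (k+l+1),
            (-1:ℂ)^p * cchoose x s * ((s.choose (p+q)) : ℂ)
              * (((p+q).choose p) : ℂ) * (((c+k).choose (c+(p+q))) : ℂ)
              * (((c+(l+q)).choose (c+s)) : ℂ) := by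
      intro q hq
      rw [Finset.mem_range] at hq
      have hshift := sumshift (fun s =>
        (-1:ℂ)^p * cchoose x s * ((s.choose (p+q)) : ℂ) * (((p+q).choose p) : ℂ)
          * (((c+k).choose (c+(p+q))) : ℂ) * (((c+(l+q)).choose (c+s)) : ℂ))
        (p+q) (l-p+1)
        (fun u hu => by
          have hz : u.choose (p+q) = 0 := Nat.choose_eq_zero_of_lt hu
          simp [hz])
      have harg : ∀ r ∈ range (l-p+1), (p+q) + r = p+q+r := fun r _ => rfl
      rw [show (p+q)+(l-p+1) = l+q+1 by omega] at hshift
      calc ∑ r ∈ range (l-p+1),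
            (-1:ℂ)^p * cchoose x (p+q+r) * (((p+q+r).choose (p+q)) : ℂ)
              * (((p+q).choose p) : ℂ) * (((c+k).choose (c+(p+q))) : ℂ)
              * (((c+(l+q)).choose (c+(p+q+r))) : ℂ)
          = ∑ s ∈ range (l+q+1),
            (-1:ℂ)^p * cchoose x s * ((s.choose (p+q)) : ℂ)
              * (((p+q).choose p) : ℂ) * (((c+k).choose (c+(p+q))) : ℂ)
              * (((c+(l+q)).choose (c+s)) : ℂ) := hshift
        _ = ∑ s ∈ range (k+l+1),
            (-1:ℂ)^p * cchoose x s * ((s.choose (p+q)) : ℂ)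
              * (((p+q).choose p) : ℂ) * (((c+k).choose (c+(p+q))) : ℂ)
              * (((c+(l+q)).choose (c+s)) : ℂ) := by
            apply extendsum _ _ _ (by omega)
            intro s hs
            have hz : (c+(l+q)).choose (c+s) = 0 :=
              Nat.choose_eq_zero_of_lt (by omega)
            simp [hz]
    rw [Finset.sum_congr rfl inner_q]
    have hshift2 := sumshift (fun u =>
      ∑ s ∈ range (k+l+1),
        (-1:ℂ)^p * cchoose x s * ((s.choose u) : ℂ) * ((u.choose p) : ℂ)
          * (((c+k).choose (c+u)) : ℂ) * (((c+(l+(u-p))).choose (c+s)) : ℂ))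
      p (k-p+1)
      (fun u hu => by
        apply Finset.sum_eq_zero
        intro s _
        have hz : u.choose p = 0 := Nat.choose_eq_zero_of_lt hu
        simp [hz])
    rw [show p+(k-p+1) = k+1 by omega] at hshift2
    rw [← hshift2]
    apply Finset.sum_congr rfl
    intro q hq
    apply Finset.sum_congr rfl
    intro s hs
    rw [show p + q - p = q by omega]
  rw [Finset.sum_congr rfl step1]
  -- swap sums: p, u, s -> s, u, p
  rw [Finset.sum_comm]
  have swap2 : ∀ u ∈ range (k+1),
      ∑ p ∈ range (k+1), ∑ s ∈ range (k+l+1),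
          (-1:ℂ)^p * cchoose x s * ((s.choose u) : ℂ) * ((u.choose p) : ℂ)
            * (((c+k).choose (c+u)) : ℂ) * (((c+(l+(u-p))).choose (c+s)) : ℂ)
      = ∑ s ∈ range (k+l+1), ∑ p ∈ range (k+1),
          (-1:ℂ)^p * cchoose x s * ((s.choose u) : ℂ) * ((u.choose p) : ℂ)
            * (((c+k).choose (c+u)) : ℂ) * (((c+(l+(u-p))).choose (c+s)) : ℂ) :=
    fun u _ => Finset.sum_comm
  rw [Finset.sum_congr rfl swap2, Finset.sum_comm]
  -- now evaluate the inner p-sum via altsum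
  have inner_p : ∀ s ∈ range (k+l+1), ∀ u ∈ range (k+1),
      ∑ p ∈ range (k+1),
          (-1:ℂ)^p * cchoose x s * ((s.choose u) : ℂ) * ((u.choose p) : ℂ)
            * (((c+k).choose (c+u)) : ℂ) * (((c+(l+(u-p))).choose (c+s)) : ℂ)
      = cchoose x s * ((s.choose u) : ℂ) * (((c+k).choose (c+u)) : ℂ)
          * (((c+l).choose (c+(s-u))) : ℂ) := by
    intro s hs u hu
    rw [Finset.mem_range] at hs hu
    rcases le_or_gt u s with hus | hus
    · -- main case : apply altsum
      have key : ∑ p ∈ range (k+1),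
          (-1:ℂ)^p * ((u.choose p) : ℂ) * (((c+(l+(u-p))).choose (c+s)) : ℂ)
          = (((c+l).choose (c+(s-u))) : ℂ) := by
        rw [← extendsum _ (u+1) (k+1) (by omega)
          (fun p hp => by
            have hz : u.choose p = 0 := Nat.choose_eq_zero_of_lt (by omega)
            simp [hz])]
        have e : ∀ p ∈ range (u+1),
            (-1:ℂ)^p * ((u.choose p) : ℂ) * (((c+(l+(u-p))).choose (c+s)) : ℂ)
            = (-1:ℂ)^p * ((u.choose p) : ℂ) * ((((c+l+u)-p).choose (c+s)) : ℂ) := by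
          intro p hp
          rw [Finset.mem_range] at hp
          rw [show c+(l+(u-p)) = (c+l+u)-p by omega]
        rw [Finset.sum_congr rfl e, altsum u (c+s) (c+l+u) (by omega) (by omega)]
        rw [show (c+l+u)-u = c+l by omega, show (c+s)-u = c+(s-u) by omega]
      calc ∑ p ∈ range (k+1),
          (-1:ℂ)^p * cchoose x s * ((s.choose u) : ℂ) * ((u.choose p) : ℂ)
            * (((c+k).choose (c+u)) : ℂ) * (((c+(l+(u-p))).choose (c+s)) : ℂ)
          = (cchoose x s * ((s.choose u) : ℂ) * (((c+k).choose (c+u)) : ℂ))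
            * ∑ p ∈ range (k+1),
              (-1:ℂ)^p * ((u.choose p) : ℂ) * (((c+(l+(u-p))).choose (c+s)) : ℂ) := by
            rw [Finset.mul_sum]
            apply Finset.sum_congr rfl
            intro p _
            ring
        _ = cchoose x s * ((s.choose u) : ℂ) * (((c+k).choose (c+u)) : ℂ)
            * (((c+l).choose (c+(s-u))) : ℂ) := by rw [key]
    · -- degenerate case : s < u, both sides vanish
      have hz : s.choose u = 0 := Nat.choose_eq_zero_of_lt hus
      simp [hz]
  rw [Finset.sum_congr rfl (fun s hs => Finset.sum_congr rfl (inner_p s hs))]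
  -- final range adjustment
  apply Finset.sum_congr rfl
  intro s hs
  rw [Finset.mem_range] at hs
  rw [Finset.mul_sum]
  rw [extendsum (fun u => cchoose x s * ((s.choose u) : ℂ) * (((c+k).choose (c+u)) : ℂ)
      * (((c+l).choose (c+(s-u))) : ℂ)) (k+1) (k+s+1) (by omega)
    (fun u hu => by
      have hz : (c+k).choose (c+u) = 0 := Nat.choose_eq_zero_of_lt (by omega)
      simp [hz])]
  rw [extendsum (fun u => cchoose x s * (((s.choose u) : ℂ) * (((c+k).choose (c+u)) : ℂ)
      * (((c+l).choose (c+(s-u))) : ℂ))) (s+1) (k+s+1) (by omega)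
    (fun u hu => by
      have hz : s.choose u = 0 := Nat.choose_eq_zero_of_lt (by omega)
      simp [hz])]
  apply Finset.sum_congr rfl
  intro u _
  ring

lemma core (x : ℂ) (c k l : ℕ) :
    ∑ i ∈ range (k+1), ∑ j ∈ range (l+1),
      cchoose x (i+j) * (((i+j).choose i) : ℂ) * (((c+k).choose (k-i)) : ℂ)
        * (((c+l).choose (l-j)) : ℂ)
    = ∑ p ∈ range (min k l + 1), (-1:ℂ)^p * cchoose x p
        * cchoose (x + (((c+k) : ℕ) : ℂ) - (p:ℂ)) (k-p)
        * cchoose (x + (((c+l) : ℕ) : ℂ) - (p:ℂ)) (l-p) := by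
  rcases le_total k l with h | h
  · rw [Nat.min_eq_left h, lhs_fiber]
    exact (rhs_fiber x c k l h).symm
  · rw [Nat.min_eq_right h]
    have swap : ∑ i ∈ range (k+1), ∑ j ∈ range (l+1),
        cchoose x (i+j) * (((i+j).choose i) : ℂ) * (((c+k).choose (k-i)) : ℂ)
          * (((c+l).choose (l-j)) : ℂ)
      = ∑ i ∈ range (l+1), ∑ j ∈ range (k+1),
        cchoose x (i+j) * (((i+j).choose i) : ℂ) * (((c+l).choose (l-i)) : ℂ)
          * (((c+k).choose (k-j)) : ℂ) := by
      rw [Finset.sum_comm]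
      apply Finset.sum_congr rfl
      intro i _
      apply Finset.sum_congr rfl
      intro j _
      have h1 : (i+j).choose j = (i+j).choose i := by
        rw [← Nat.choose_symm (Nat.le_add_right i j), Nat.add_sub_cancel_left]
      rw [add_comm j i, h1]
      ring
    rw [swap, lhs_fiber, ← rhs_fiber x c l k h]
    apply Finset.sum_congr rfl
    intro p _
    ring


lemma genChoose_natCast (n j : ℕ) : genChoose (n : ℝ) j = (n.choose j : ℝ) := by
  rw [genChoose, myCastProd, Nat.descFactorial_eq_factorial_mul_choose]
  push_cast
  rw [mul_comm, mul_div_assoc, div_self (by exact_mod_cast j.factorial_ne_zero), mul_one]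

lemma poch_cchoose (b : ℂ) (n : ℕ) :
    ∏ r ∈ range n, (b + (r:ℂ)) = (-1:ℂ)^n * cchoose (-b) n * (n.factorial : ℂ) := by
  have h1 : ∀ r ∈ range n, b + (r:ℂ) = (-1) * ((-b) - (r:ℂ)) := by intro r _; ring
  rw [Finset.prod_congr rfl h1, Finset.prod_mul_distrib, Finset.prod_const, card_range,
    cchoose]
  have hf : (n.factorial:ℂ) ≠ 0 := by exact_mod_cast n.factorial_ne_zero
  field_simp

lemma asc_cchoose (y : ℂ) (n : ℕ) :
    ∏ r ∈ range n, (y + (r:ℂ)) = cchoose (y + (n:ℂ) - 1) n * (n.factorial : ℂ) := by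
  rw [cchoose, div_mul_cancel₀ _ (by exact_mod_cast n.factorial_ne_zero : (n.factorial:ℂ) ≠ 0)]
  rw [← Finset.prod_range_reflect (fun j => y + (j:ℂ)) n]
  apply Finset.prod_congr rfl
  intro j hj
  rw [Finset.mem_range] at hj
  rw [Nat.cast_sub (by omega : j ≤ n - 1), Nat.cast_sub (by omega : 1 ≤ n)]
  push_cast
  ring

-- Part 1 : the integral as a double sum of Gamma values
lemma integral_eq (k l m : ℕ) (hm : 0 < m) (a : ℂ) (h1 : 0 < a.re) (h2 : a.re < m) :
    (∫ t in Set.Ioi (0 : ℝ),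
        (laguerre ((m : ℝ) - 1) k t : ℂ) * (laguerre ((m : ℝ) - 1) l t : ℂ) *
          Complex.exp (-(t : ℂ)) * (t : ℂ) ^ ((m : ℂ) - 1 - a))
    = ∑ i ∈ range (k+1), ∑ j ∈ range (l+1),
        ((-1:ℂ)^(i+j) * ((((m-1)+k).choose (k-i)) : ℂ) * ((((m-1)+l).choose (l-j)) : ℂ)
          / ((i.factorial : ℂ) * (j.factorial : ℂ)))
          * Complex.Gamma ((m:ℂ) + i + j - a) := by
  have hsre : ∀ i j : ℕ, 0 < ((m:ℂ) + i + j - a).re := by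
    intro i j
    simp only [Complex.sub_re, Complex.add_re, Complex.natCast_re]
    have hi : (0:ℝ) ≤ i := Nat.cast_nonneg i
    have hj : (0:ℝ) ≤ j := Nat.cast_nonneg j
    linarith
  have hlag : ∀ (n : ℕ) (t : ℝ), ((laguerre ((m:ℝ)-1) n t : ℝ) : ℂ)
      = ∑ i ∈ range (n+1), (-1:ℂ)^i * ((((m-1)+n).choose (n-i)) : ℂ) * (t:ℂ)^i
          / (i.factorial : ℂ) := by
    intro n t
    rw [laguerre]
    push_cast
    apply Finset.sum_congr rfl
    intro i _
    have harg : (n : ℝ) + ((m:ℝ) - 1) = (((m-1)+n : ℕ) : ℝ) := by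
      push_cast [Nat.cast_sub hm]
      ring
    rw [harg, genChoose_natCast]
    norm_num
  have hcong : ∀ t ∈ Set.Ioi (0:ℝ),
      (laguerre ((m : ℝ) - 1) k t : ℂ) * (laguerre ((m : ℝ) - 1) l t : ℂ) *
          Complex.exp (-(t : ℂ)) * (t : ℂ) ^ ((m : ℂ) - 1 - a)
      = ∑ ij ∈ (range (k+1)) ×ˢ (range (l+1)),
          ((-1:ℂ)^(ij.1+ij.2) * ((((m-1)+k).choose (k-ij.1)) : ℂ)
            * ((((m-1)+l).choose (l-ij.2)) : ℂ)
            / ((ij.1.factorial : ℂ) * (ij.2.factorial : ℂ)))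
          * (((Real.exp (-t) : ℝ) : ℂ) * (t:ℂ) ^ ((m:ℂ) + ij.1 + ij.2 - a - 1)) := by
    intro t ht
    rw [Set.mem_Ioi] at ht
    have htne : (t:ℂ) ≠ 0 := by
      simp only [ne_eq, Complex.ofReal_eq_zero]
      exact ne_of_gt ht
    rw [hlag k t, hlag l t, Finset.sum_mul_sum]
    simp only [Finset.sum_mul]
    rw [← Finset.sum_product']
    apply Finset.sum_congr rfl
    intro ij _
    obtain ⟨i, j⟩ := ij
    simp only []
    have hpow : (t:ℂ)^i * (t:ℂ)^j * (t:ℂ)^((m:ℂ)-1-a)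
        = (t:ℂ)^((m:ℂ) + i + j - a - 1) := by
      rw [← Complex.cpow_natCast (t:ℂ) i, ← Complex.cpow_natCast (t:ℂ) j,
        ← Complex.cpow_add _ _ htne, ← Complex.cpow_add _ _ htne,
        show (i:ℂ) + (j:ℂ) + ((m:ℂ)-1-a) = (m:ℂ) + i + j - a - 1 by ring]
    have hexp : ((Real.exp (-t) : ℝ) : ℂ) = Complex.exp (-(t:ℂ)) := by
      rw [Complex.ofReal_exp, Complex.ofReal_neg]
    rw [hexp, ← hpow, pow_add]
    ring
  rw [setIntegral_congr_fun measurableSet_Ioi hcong]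
  rw [MeasureTheory.integral_finset_sum _ (by
    intro ij _
    exact (Complex.GammaIntegral_convergent (hsre ij.1 ij.2)).const_mul _)]
  rw [Finset.sum_product]
  apply Finset.sum_congr rfl
  intro i _
  apply Finset.sum_congr rfl
  intro j _
  dsimp only
  rw [MeasureTheory.integral_const_mul]
  congr 1
  rw [Complex.Gamma_eq_integral (hsre i j), Complex.GammaIntegral]

theorem stmt2 (k l m : ℕ) (hm : 0 < m) (a : ℂ) (h1 : 0 < a.re) (h2 : a.re < m) :
    (∫ t in Set.Ioi (0 : ℝ),
        (laguerre ((m : ℝ) - 1) k t : ℂ) * (laguerre ((m : ℝ) - 1) l t : ℂ) *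
          Complex.exp (-(t : ℂ)) * (t : ℂ) ^ ((m : ℂ) - 1 - a))
      = ((Complex.Gamma a) ^ 2)⁻¹ *
          ∑ p ∈ Finset.range (min k l + 1),
            (Complex.Gamma (a + (k : ℂ) - (p : ℂ)) / (Nat.factorial (k - p) : ℂ)) *
            (Complex.Gamma (a + (l : ℂ) - (p : ℂ)) / (Nat.factorial (l - p) : ℂ)) *
            (Complex.Gamma ((p : ℂ) + (m : ℂ) - a) / (Nat.factorial p : ℂ)) := by
  rw [integral_eq k l m hm a h1 h2]
  set c := m - 1 with hc
  set b := (m:ℂ) - a with hb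
  set x := a - (m:ℂ) with hx
  have hbre : 0 < b.re := by
    rw [hb]
    simp only [Complex.sub_re, Complex.natCast_re]
    linarith
  have hGa : Complex.Gamma a ≠ 0 := by
    apply Complex.Gamma_ne_zero
    intro n hn
    rw [hn] at h1
    simp only [Complex.neg_re, Complex.natCast_re] at h1
    have : (0:ℝ) ≤ n := Nat.cast_nonneg n
    linarith
  have hGb : Complex.Gamma b ≠ 0 := by
    apply Complex.Gamma_ne_zero
    intro n hn
    rw [hn] at hbre
    simp only [Complex.neg_re, Complex.natCast_re] at hbre
    have : (0:ℝ) ≤ n := Nat.cast_nonneg n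
    linarith
  have hnegb : -b = x := by rw [hb, hx]; ring
  -- LHS transformation
  have hL : ∑ i ∈ range (k+1), ∑ j ∈ range (l+1),
        ((-1:ℂ)^(i+j) * (((c+k).choose (k-i)) : ℂ) * (((c+l).choose (l-j)) : ℂ)
          / ((i.factorial : ℂ) * (j.factorial : ℂ)))
          * Complex.Gamma ((m:ℂ) + i + j - a)
      = (∑ i ∈ range (k+1), ∑ j ∈ range (l+1),
          cchoose x (i+j) * (((i+j).choose i) : ℂ) * (((c+k).choose (k-i)) : ℂ)
            * (((c+l).choose (l-j)) : ℂ)) * Complex.Gamma b := by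
    rw [Finset.sum_mul]
    apply Finset.sum_congr rfl
    intro i _
    rw [Finset.sum_mul]
    apply Finset.sum_congr rfl
    intro j _
    have hGij : Complex.Gamma ((m:ℂ) + i + j - a)
        = (-1:ℂ)^(i+j) * cchoose x (i+j) * (((i+j).factorial) : ℂ) * Complex.Gamma b := by
      rw [show (m:ℂ) + i + j - a = b + (((i+j):ℕ):ℂ) by rw [hb]; push_cast; ring]
      rw [Gamma_shift b hbre (i+j), poch_cchoose, hnegb]
    have hfc : (((i+j).factorial) : ℂ)
        = (((i+j).choose i) : ℂ) * (i.factorial : ℂ) * (j.factorial : ℂ) := by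
      have hnat := Nat.add_choose_mul_factorial_mul_factorial i j
      have hsymm : (i+j).choose j = (i+j).choose i := by
        rw [← Nat.choose_symm (Nat.le_add_right i j), Nat.add_sub_cancel_left]
      rw [← hsymm]
      exact_mod_cast congrArg (Nat.cast : ℕ → ℂ) hnat.symm
    have hsq : ((-1:ℂ))^(i+j) * ((-1:ℂ))^(i+j) = 1 := by
      rw [← mul_pow]; norm_num
    have hfi : (i.factorial : ℂ) ≠ 0 := by exact_mod_cast i.factorial_ne_zero
    have hfj : (j.factorial : ℂ) ≠ 0 := by exact_mod_cast j.factorial_ne_zero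
    rw [hGij, hfc]
    field_simp
    linear_combination (cchoose x (i+j) * (((i+j).choose i) : ℂ) * (((c+k).choose (k-i)) : ℂ)
      * (((c+l).choose (l-j)) : ℂ)) * hsq
  -- RHS transformation
  have hR : ∀ p ∈ range (min k l + 1),
      (Complex.Gamma (a + (k : ℂ) - (p : ℂ)) / (Nat.factorial (k - p) : ℂ)) *
        (Complex.Gamma (a + (l : ℂ) - (p : ℂ)) / (Nat.factorial (l - p) : ℂ)) *
        (Complex.Gamma ((p : ℂ) + (m : ℂ) - a) / (Nat.factorial p : ℂ))
      = ((-1:ℂ)^p * cchoose x p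
          * cchoose (x + (((c+k) : ℕ) : ℂ) - (p:ℂ)) (k-p)
          * cchoose (x + (((c+l) : ℕ) : ℂ) - (p:ℂ)) (l-p))
        * (Complex.Gamma a * Complex.Gamma a * Complex.Gamma b) := by
    intro p hp
    rw [Finset.mem_range] at hp
    have hpk : p ≤ k := by omega
    have hpl : p ≤ l := by omega
    have hone : (1:ℕ) ≤ m := hm
    have eK : Complex.Gamma (a + (k : ℂ) - (p : ℂ))
        = cchoose (x + (((c+k) : ℕ) : ℂ) - (p:ℂ)) (k-p) * (((k-p).factorial) : ℂ)
          * Complex.Gamma a := by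
      rw [show a + (k:ℂ) - (p:ℂ) = a + (((k-p:ℕ)):ℂ) by push_cast [Nat.cast_sub hpk]; ring]
      rw [Gamma_shift a h1 (k-p), asc_cchoose]
      rw [show a + (((k-p:ℕ)):ℂ) - 1 = x + (((c+k) : ℕ) : ℂ) - (p:ℂ) by
        rw [hx, hc]; push_cast [Nat.cast_sub hpk, Nat.cast_sub hone]; ring]
    have eL : Complex.Gamma (a + (l : ℂ) - (p : ℂ))
        = cchoose (x + (((c+l) : ℕ) : ℂ) - (p:ℂ)) (l-p) * (((l-p).factorial) : ℂ)
          * Complex.Gamma a := by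
      rw [show a + (l:ℂ) - (p:ℂ) = a + (((l-p:ℕ)):ℂ) by push_cast [Nat.cast_sub hpl]; ring]
      rw [Gamma_shift a h1 (l-p), asc_cchoose]
      rw [show a + (((l-p:ℕ)):ℂ) - 1 = x + (((c+l) : ℕ) : ℂ) - (p:ℂ) by
        rw [hx, hc]; push_cast [Nat.cast_sub hpl, Nat.cast_sub hone]; ring]
    have eP : Complex.Gamma ((p:ℂ) + (m:ℂ) - a)
        = (-1:ℂ)^p * cchoose x p * ((p.factorial) : ℂ) * Complex.Gamma b := by
      rw [show (p:ℂ) + (m:ℂ) - a = b + (p:ℂ) by rw [hb]; ring]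
      rw [show (p:ℂ) = ((p:ℕ):ℂ) by norm_cast] -- ensure cast form for Gamma_shift
      rw [Gamma_shift b hbre p, poch_cchoose, hnegb]
    rw [eK, eL, eP]
    have f1 : (((k-p).factorial) : ℂ) ≠ 0 := by exact_mod_cast (k-p).factorial_ne_zero
    have f2 : (((l-p).factorial) : ℂ) ≠ 0 := by exact_mod_cast (l-p).factorial_ne_zero
    have f3 : ((p.factorial) : ℂ) ≠ 0 := by exact_mod_cast p.factorial_ne_zero
    field_simp
  rw [hL, Finset.sum_congr rfl hR, ← Finset.sum_mul, ← core x c k l]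
  field_simp
end

section
/- Let a, b, c > 0 be real numbers with a + b = c, let γ > −1 be real, and let k, l ∈ ℕ₀ with l ≤ k. Then ∫₀^∞ L_l^{γ}(a t) L_k^{γ}(b t) e^{−c t} t^{γ} dt = [Γ(k+l+γ+1) / (l! k!)] · b^l a^k / c^{k+l+γ+1}, where Γ is the Gamma function. -/
open MeasureTheory

open Real Set Filter Topology

lemma genChoose_zero (t : ℝ) : genChoose t 0 = 1 := by simp [genChoose]

lemma genChoose_succ (t : ℝ) (m : ℕ) :
    ((m : ℝ) + 1) * genChoose t (m+1) = (t - m) * genChoose t m := by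
  unfold genChoose
  rw [Finset.prod_range_succ, Nat.factorial_succ]
  have h1 : (m.factorial : ℝ) ≠ 0 := Nat.cast_ne_zero.2 m.factorial_ne_zero
  have h2 : ((m : ℝ) + 1) ≠ 0 := by positivity
  push_cast
  field_simp

lemma genChoose_pascal (t : ℝ) (m : ℕ) :
    genChoose (t+1) (m+1) = genChoose t (m+1) + genChoose t m := by
  unfold genChoose
  have h : ∏ i ∈ Finset.range (m+1), (t + 1 - (i:ℝ)) =
      (∏ i ∈ Finset.range m, (t - (i:ℝ))) * (t+1) := by
    rw [Finset.prod_range_succ']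
    congr 1
    · exact Finset.prod_congr rfl fun i _ => by push_cast; ring
    · simp
  rw [h, Finset.prod_range_succ, Nat.factorial_succ]
  have h1 : (m.factorial : ℝ) ≠ 0 := Nat.cast_ne_zero.2 m.factorial_ne_zero
  have h2 : ((m : ℝ) + 1) ≠ 0 := by positivity
  push_cast
  field_simp
  ring

lemma laguerre_zero (γ x : ℝ) : laguerre γ 0 x = 1 := by
  simp [laguerre, genChoose]

lemma keyB (γ : ℝ) (n j : ℕ) (hj : j < n) :
    (γ+1) * genChoose ((n:ℝ)+γ+1) (n-(j+1)) +
      ((j:ℝ)+1) * genChoose ((n:ℝ)+γ+1+1) (n-j)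
      = ((n:ℝ)+1) * genChoose ((n:ℝ)+γ+1) (n-j) := by
  set m : ℕ := n - j - 1 with hm
  have h1 : n - (j+1) = m := by omega
  have h2 : n - j = m + 1 := by omega
  have hcast : (m : ℝ) = (n:ℝ) - j - 1 := by
    have : (m : ℕ) + (j + 1) = n := by omega
    have := congrArg (fun x : ℕ => (x : ℝ)) this
    push_cast at this
    linarith
  rw [h1, h2, genChoose_pascal]
  have hs := genChoose_succ ((n:ℝ)+γ+1) m
  rw [hcast] at hs
  linear_combination -hs

lemma hasDerivAt_laguerre (γ : ℝ) (l : ℕ) (x : ℝ) :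
    HasDerivAt (fun y => laguerre γ l y) (laguerre γ l x - laguerre (γ+1) l x) x := by
  unfold laguerre
  have h : HasDerivAt
      (fun y : ℝ => ∑ j ∈ Finset.range (l+1),
        (-1:ℝ)^j * genChoose ((l:ℝ)+γ) (l-j) * y^j / (j.factorial : ℝ))
      (∑ j ∈ Finset.range (l+1),
        ((-1:ℝ)^j * genChoose ((l:ℝ)+γ) (l-j) * ((j:ℝ) * x^(j-1))) / (j.factorial : ℝ)) x := by
    apply HasDerivAt.fun_sum
    intro j _
    exact ((hasDerivAt_pow j x).const_mul ((-1:ℝ)^j * genChoose ((l:ℝ)+γ) (l-j))).div_const _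
  convert h using 1
  have e : (l:ℝ) + (γ+1) = ((l:ℝ)+γ) + 1 := by ring
  conv_rhs => rw [Finset.sum_range_succ']
  rw [e, ← Finset.sum_sub_distrib, Finset.sum_range_succ]
  have hlast : (-1:ℝ)^l * genChoose ((l:ℝ)+γ) (l-l) * x^l / (l.factorial : ℝ)
      - (-1:ℝ)^l * genChoose ((l:ℝ)+γ+1) (l-l) * x^l / (l.factorial : ℝ) = 0 := by
    simp [Nat.sub_self, genChoose_zero]
  have hzero : ((-1:ℝ)^0 * genChoose ((l:ℝ)+γ) (l-0) * (((0:ℕ):ℝ) * x^(0-1))) / ((Nat.factorial 0 : ℕ) : ℝ) = 0 := by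
    simp
  rw [hlast, add_zero, hzero, add_zero]
  apply Finset.sum_congr rfl
  intro j hj
  have hjl : j < l := Finset.mem_range.1 hj
  set m : ℕ := l - j - 1 with hm
  have h1 : l - (j+1) = m := by omega
  have h2 : l - j = m + 1 := by omega
  rw [h1, h2, genChoose_pascal]
  have hf : ((j+1).factorial : ℝ) = ((j:ℝ)+1) * (j.factorial : ℝ) := by
    rw [Nat.factorial_succ]; push_cast; ring
  have h3 : (j + 1 : ℕ) - 1 = j := by omega
  rw [hf, h3]
  have hj1 : ((j:ℝ)+1) ≠ 0 := by positivity
  have hjf : (j.factorial : ℝ) ≠ 0 := Nat.cast_ne_zero.2 j.factorial_ne_zero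
  have hp : ((-1:ℝ))^(j+1) = -(-1:ℝ)^j := by rw [pow_succ]; ring
  rw [hp]
  push_cast
  field_simp
  ring

lemma laguerre_identB (γ : ℝ) (n : ℕ) (x : ℝ) :
    (γ+1) * laguerre (γ+1) n x - x * laguerre (γ+1+1) n x
      = ((n:ℝ)+1) * laguerre γ (n+1) x := by
  unfold laguerre
  have e1 : (n:ℝ) + (γ+1+1) = ((n:ℝ) + γ + 1) + 1 := by ring
  have e2 : ((n+1:ℕ):ℝ) + γ = (n:ℝ) + γ + 1 := by push_cast; ring
  have e3 : (n:ℝ) + (γ+1) = (n:ℝ) + γ + 1 := by ring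
  rw [e1, e2, e3]
  rw [Finset.mul_sum, Finset.mul_sum]
  rw [Finset.sum_range_succ'
    (fun j => (-1:ℝ)^j * genChoose ((n:ℝ)+γ+1) (n+1-j) * x^j / (j.factorial : ℝ)) (n+1)]
  rw [mul_add, Finset.mul_sum]
  rw [Finset.sum_range_succ'
    (fun i => (γ+1) * ((-1:ℝ)^i * genChoose ((n:ℝ)+γ+1) (n-i) * x^i / (i.factorial : ℝ))) n]
  rw [Finset.sum_range_succ
    (fun i => x * ((-1:ℝ)^i * genChoose ((n:ℝ)+γ+1+1) (n-i) * x^i / (i.factorial : ℝ))) n]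
  rw [Finset.sum_range_succ
    (fun k => ((n:ℝ)+1) * ((-1:ℝ)^(k+1) * genChoose ((n:ℝ)+γ+1) (n+1-(k+1)) * x^(k+1) / ((k+1).factorial : ℝ))) n]
  have hterm : ∀ k ∈ Finset.range n,
      (γ+1) * ((-1:ℝ)^(k+1) * genChoose ((n:ℝ)+γ+1) (n-(k+1)) * x^(k+1) / ((k+1).factorial : ℝ))
        = x * ((-1:ℝ)^k * genChoose ((n:ℝ)+γ+1+1) (n-k) * x^k / (k.factorial : ℝ))
          + ((n:ℝ)+1) * ((-1:ℝ)^(k+1) * genChoose ((n:ℝ)+γ+1) (n+1-(k+1)) * x^(k+1) / ((k+1).factorial : ℝ)) := by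
    intro k hk
    have hkn : k < n := Finset.mem_range.1 hk
    have hkey := keyB γ n k hkn
    have h4 : n + 1 - (k+1) = n - k := by omega
    have hf : ((k+1).factorial : ℝ) = ((k:ℝ)+1) * (k.factorial : ℝ) := by
      rw [Nat.factorial_succ]; push_cast; ring
    have hp : ((-1:ℝ))^(k+1) = -(-1:ℝ)^k := by rw [pow_succ]; ring
    have hk1 : ((k:ℝ)+1) ≠ 0 := by positivity
    have hkf : (k.factorial : ℝ) ≠ 0 := Nat.cast_ne_zero.2 k.factorial_ne_zero
    have hinv : ((k:ℝ)+1) * ((k:ℝ)+1)⁻¹ = 1 := mul_inv_cancel₀ hk1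
    have hfi : ((k+1).factorial : ℝ)⁻¹ = ((k:ℝ)+1)⁻¹ * (k.factorial:ℝ)⁻¹ := by
      rw [hf, mul_inv]
    rw [h4]
    linear_combination (-((-1:ℝ)^k * x^(k+1) * (((k+1).factorial : ℝ))⁻¹)) * hkey
      + ((-1:ℝ)^k * x^(k+1) * (((k:ℝ)+1)) * genChoose ((n:ℝ)+γ+1+1) (n-k)) * hfi
      + ((-1:ℝ)^k * x^(k+1) * genChoose ((n:ℝ)+γ+1+1) (n-k) * (k.factorial:ℝ)⁻¹) * hinv
  rw [Finset.sum_congr rfl hterm, Finset.sum_add_distrib]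
  have h8 : x * ((-1:ℝ)^n * genChoose ((n:ℝ)+γ+1+1) (n-n) * x^n / (n.factorial : ℝ))
      + ((n:ℝ)+1) * ((-1:ℝ)^(n+1) * genChoose ((n:ℝ)+γ+1) (n+1-(n+1)) * x^(n+1) / ((n+1).factorial : ℝ)) = 0 := by
    have hf : ((n+1).factorial : ℝ) = ((n:ℝ)+1) * (n.factorial : ℝ) := by
      rw [Nat.factorial_succ]; push_cast; ring
    have hn1 : ((n:ℝ)+1) ≠ 0 := by positivity
    have hnf : (n.factorial : ℝ) ≠ 0 := Nat.cast_ne_zero.2 n.factorial_ne_zero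
    simp only [Nat.sub_self, genChoose_zero, Nat.add_sub_cancel_left]
    rw [hf, pow_succ, pow_succ]
    field_simp
    ring
  have h9 : (γ+1) * ((-1:ℝ)^0 * genChoose ((n:ℝ)+γ+1) (n-0) * x^0 / ((Nat.factorial 0 : ℕ) : ℝ))
      = ((n:ℝ)+1) * ((-1:ℝ)^0 * genChoose ((n:ℝ)+γ+1) (n+1-0) * x^0 / ((Nat.factorial 0 : ℕ) : ℝ)) := by
    have hs := genChoose_succ ((n:ℝ)+γ+1) n
    simp only [Nat.sub_zero, pow_zero, one_mul, Nat.factorial_zero, Nat.cast_one, div_one,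
      mul_one]
    linear_combination -hs
  linear_combination h9 - h8

lemma prod_split (β : ℝ) (l : ℕ) : ∀ d : ℕ, d ≤ l →
    (∏ m ∈ Finset.range d, ((l:ℝ) + β - m)) * (∏ m ∈ Finset.range (l - d), (β + 1 + m))
      = ∏ m ∈ Finset.range l, (β + 1 + m) := by
  intro d
  induction d with
  | zero => intro _; simp
  | succ d ih =>
    intro h
    have hd : d ≤ l := Nat.le_of_succ_le h
    have e1 : l - d = (l - (d+1)) + 1 := by omega
    have e2 : ((l - (d+1) : ℕ) : ℝ) = (l:ℝ) - d - 1 := by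
      have h2 : (l - (d+1) : ℕ) + (d+1) = l := by omega
      have := congrArg (fun x : ℕ => (x : ℝ)) h2
      push_cast at this
      linarith
    have key := ih hd
    rw [e1, Finset.prod_range_succ, e2] at key
    rw [Finset.prod_range_succ]
    linear_combination key

lemma Gamma_add_nat (β : ℝ) (hβ : -1 < β) (j : ℕ) :
    Real.Gamma (β + j + 1) = Real.Gamma (β + 1) * ∏ m ∈ Finset.range j, (β + 1 + m) := by
  induction j with
  | zero => simp
  | succ j ih =>
    have hpos : (0:ℝ) < β + j + 1 := by
      have : (0:ℝ) ≤ j := Nat.cast_nonneg j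
      linarith
    have e : β + ((j:ℕ)+1:ℕ) + 1 = (β + j + 1) + 1 := by push_cast; ring
    rw [e, Real.Gamma_add_one (ne_of_gt hpos), ih, Finset.prod_range_succ]
    ring

lemma integrableOn_rpow_exp {s c : ℝ} (hs : -1 < s) (hc : 0 < c) :
    IntegrableOn (fun t : ℝ => t ^ s * Real.exp (-(c * t))) (Ioi 0) := by
  have h := integrableOn_rpow_mul_exp_neg_mul_rpow hs (by norm_num : (0:ℝ) < 1) hc
  refine h.congr_fun (fun t _ => ?_) measurableSet_Ioi
  beta_reduce
  rw [Real.rpow_one, neg_mul]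

lemma integral_rpow_exp {s c : ℝ} (hs : -1 < s) (hc : 0 < c) :
    ∫ t in Ioi (0:ℝ), t ^ s * Real.exp (-(c * t))
      = Real.Gamma (s+1) * (1/c) ^ (s+1) := by
  have h := integral_rpow_mul_exp_neg_mul_Ioi (by linarith : (0:ℝ) < s + 1) hc
  rw [show s + 1 - 1 = s by ring] at h
  rw [h, mul_comm]

lemma rpow_mono_eq {s : ℝ} {i j : ℕ} {t : ℝ} (ht : 0 < t) :
    t ^ s * t ^ i * t ^ j = t ^ (s + i + j) := by
  rw [Real.rpow_add ht, Real.rpow_add ht, Real.rpow_natCast, Real.rpow_natCast]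

lemma laguerre_form_eq (γ₁ γ₂ s a b c : ℝ) (p q : ℕ) {t : ℝ} (ht : 0 < t) :
    laguerre γ₁ p (a*t) * laguerre γ₂ q (b*t) * Real.exp (-(c*t)) * t ^ s
      = ∑ i ∈ Finset.range (p+1), ∑ j ∈ Finset.range (q+1),
          (((-1:ℝ)^i * genChoose ((p:ℝ)+γ₁) (p-i) * a^i / (i.factorial:ℝ)) *
           ((-1:ℝ)^j * genChoose ((q:ℝ)+γ₂) (q-j) * b^j / (j.factorial:ℝ))) *
          (t ^ (s + i + j) * Real.exp (-(c*t))) := by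
  unfold laguerre
  rw [Finset.sum_mul_sum, Finset.sum_mul, Finset.sum_mul]
  apply Finset.sum_congr rfl
  intro i _
  rw [Finset.sum_mul, Finset.sum_mul]
  apply Finset.sum_congr rfl
  intro j _
  rw [← rpow_mono_eq (s := s) (i := i) (j := j) ht, mul_pow, mul_pow]
  ring

lemma integrableOn_laguerre_form (γ₁ γ₂ s a b c : ℝ) (p q : ℕ) (hs : -1 < s) (hc : 0 < c) :
    IntegrableOn (fun t : ℝ =>
      laguerre γ₁ p (a*t) * laguerre γ₂ q (b*t) * Real.exp (-(c*t)) * t ^ s) (Ioi 0) := by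
  have hsum : IntegrableOn (fun t : ℝ =>
      ∑ i ∈ Finset.range (p+1), ∑ j ∈ Finset.range (q+1),
          (((-1:ℝ)^i * genChoose ((p:ℝ)+γ₁) (p-i) * a^i / (i.factorial:ℝ)) *
           ((-1:ℝ)^j * genChoose ((q:ℝ)+γ₂) (q-j) * b^j / (j.factorial:ℝ))) *
          (t ^ (s + i + j) * Real.exp (-(c*t)))) (Ioi 0) := by
    apply MeasureTheory.integrable_finset_sum
    intro i _
    apply MeasureTheory.integrable_finset_sum
    intro j _
    have hbase : IntegrableOn (fun t : ℝ => t ^ (s + i + j) * Real.exp (-(c*t))) (Ioi 0) := by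
      apply integrableOn_rpow_exp _ hc
      have hi : (0:ℝ) ≤ i := Nat.cast_nonneg i
      have hj : (0:ℝ) ≤ j := Nat.cast_nonneg j
      linarith
    exact hbase.const_mul _
  exact hsum.congr_fun (fun t ht => (laguerre_form_eq γ₁ γ₂ s a b c p q ht).symm) measurableSet_Ioi

lemma tendsto_laguerre_form (γ₁ γ₂ s a b c : ℝ) (p q : ℕ) (hc : 0 < c) :
    Tendsto (fun t : ℝ => laguerre γ₁ p (a*t) * laguerre γ₂ q (b*t) * Real.exp (-(c*t)) * t ^ s)
      atTop (𝓝 0) := by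
  have hsum : Tendsto (fun t : ℝ =>
      ∑ i ∈ Finset.range (p+1), ∑ j ∈ Finset.range (q+1),
          (((-1:ℝ)^i * genChoose ((p:ℝ)+γ₁) (p-i) * a^i / (i.factorial:ℝ)) *
           ((-1:ℝ)^j * genChoose ((q:ℝ)+γ₂) (q-j) * b^j / (j.factorial:ℝ))) *
          (t ^ (s + i + j) * Real.exp (-(c*t)))) atTop (𝓝 0) := by
    have : (0:ℝ) = ∑ i ∈ Finset.range (p+1), ∑ j ∈ Finset.range (q+1), (0:ℝ) := by simp
    rw [this]
    apply tendsto_finset_sum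
    intro i _
    apply tendsto_finset_sum
    intro j _
    have hbase : Tendsto (fun t : ℝ => t ^ (s + i + j) * Real.exp (-(c*t))) atTop (𝓝 0) := by
      have := tendsto_rpow_mul_exp_neg_mul_atTop_nhds_zero (s + i + j) c hc
      refine this.congr (fun t => ?_)
      rw [neg_mul]
    simpa using hbase.const_mul
      (((-1:ℝ)^i * genChoose ((p:ℝ)+γ₁) (p-i) * a^i / (i.factorial:ℝ)) *
       ((-1:ℝ)^j * genChoose ((q:ℝ)+γ₂) (q-j) * b^j / (j.factorial:ℝ)))
  apply hsum.congr' 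
  filter_upwards [Ioi_mem_atTop (0:ℝ)] with t ht
  exact (laguerre_form_eq γ₁ γ₂ s a b c p q ht).symm

lemma laguerre_continuous (γ : ℝ) (k : ℕ) (A : ℝ) :
    Continuous (fun t : ℝ => laguerre γ k (A*t)) := by
  unfold laguerre
  apply continuous_finset_sum
  intro j _
  exact ((continuous_const.mul ((continuous_const.mul continuous_id).pow j)).div_const _)

lemma integral_single (β s A : ℝ) (hβ : -1 < β) (hs : 0 < s) (l : ℕ) :
    ∫ t in Ioi (0:ℝ), laguerre β l (A*t) * Real.exp (-(s*t)) * t ^ β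
      = Real.Gamma (β + l + 1) * (s - A)^l / ((l.factorial : ℝ) * s ^ (β + (l:ℝ) + 1)) := by
  have hkey : ∀ t ∈ Ioi (0:ℝ), laguerre β l (A*t) * Real.exp (-(s*t)) * t ^ β
      = ∑ j ∈ Finset.range (l+1),
          ((-1:ℝ)^j * genChoose ((l:ℝ)+β) (l-j) * A^j / (j.factorial:ℝ)) *
          (t ^ (β + j) * Real.exp (-(s*t))) := by
    intro t ht
    have ht' : (0:ℝ) < t := ht
    unfold laguerre
    rw [Finset.sum_mul, Finset.sum_mul]
    apply Finset.sum_congr rfl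
    intro j _
    have : t ^ (β + (j:ℝ)) = t ^ β * t ^ (j:ℕ) := by
      rw [Real.rpow_add ht', Real.rpow_natCast]
    rw [this, mul_pow]
    ring
  rw [setIntegral_congr_fun measurableSet_Ioi hkey]
  have hint : ∀ j ∈ Finset.range (l+1), Integrable (fun t : ℝ =>
      ((-1:ℝ)^j * genChoose ((l:ℝ)+β) (l-j) * A^j / (j.factorial:ℝ)) *
      (t ^ (β + j) * Real.exp (-(s*t)))) (volume.restrict (Ioi 0)) := by
    intro j _
    have hbj : (-1:ℝ) < β + j := by
      have : (0:ℝ) ≤ j := Nat.cast_nonneg j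
      linarith
    exact (integrableOn_rpow_exp hbj hs).const_mul _
  rw [MeasureTheory.integral_finset_sum _ hint]
  have hval : ∀ j ∈ Finset.range (l+1),
      (∫ t in Ioi (0:ℝ), ((-1:ℝ)^j * genChoose ((l:ℝ)+β) (l-j) * A^j / (j.factorial:ℝ)) *
        (t ^ (β + j) * Real.exp (-(s*t))))
      = ((-1:ℝ)^j * genChoose ((l:ℝ)+β) (l-j) * A^j / (j.factorial:ℝ)) *
        (Real.Gamma (β + j + 1) * (1/s) ^ (β + j + 1)) := by
    intro j _
    rw [MeasureTheory.integral_const_mul]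
    congr 1
    have hbj : (-1:ℝ) < β + j := by
      have : (0:ℝ) ≤ j := Nat.cast_nonneg j
      linarith
    exact integral_rpow_exp hbj hs
  rw [Finset.sum_congr rfl hval]
  -- now pure algebra
  have hsne : s ≠ 0 := ne_of_gt hs
  have hsb1 : s ^ (β + 1) ≠ 0 := ne_of_gt (Real.rpow_pos_of_pos hs _)
  have hGpos : Real.Gamma (β + 1) ≠ 0 := ne_of_gt (Real.Gamma_pos_of_pos (by linarith))
  have hexpand : ∀ j ∈ Finset.range (l+1),
      ((-1:ℝ)^j * genChoose ((l:ℝ)+β) (l-j) * A^j / (j.factorial:ℝ)) *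
        (Real.Gamma (β + j + 1) * (1/s) ^ (β + j + 1))
      = (Real.Gamma (β+1) * (∏ m ∈ Finset.range l, (β + 1 + m)) /
          ((l.factorial : ℝ) * s ^ (β + 1) * s ^ l)) *
        ((-A)^j * s^(l-j) * ((l.choose j : ℕ) : ℝ)) := by
    intro j hj
    have hjl : j ≤ l := by have := Finset.mem_range.1 hj; omega
    have h1 : Real.Gamma (β + j + 1) = Real.Gamma (β+1) * ∏ m ∈ Finset.range j, (β + 1 + m) :=
      Gamma_add_nat β hβ j
    have h2 : (1/s : ℝ) ^ (β + j + 1) = 1 / (s ^ (β+1) * s ^ (j:ℕ)) := by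
      rw [one_div, ← Real.rpow_natCast s j, ← Real.rpow_add hs,
        Real.inv_rpow hs.le, ← one_div]
      congr 2
      ring
    have h3 : (∏ m ∈ Finset.range (l-j), ((l:ℝ) + β - m)) * (∏ m ∈ Finset.range j, (β + 1 + m))
        = ∏ m ∈ Finset.range l, (β + 1 + m) := by
      have := prod_split β l (l - j) (Nat.sub_le l j)
      rwa [show l - (l - j) = j by omega] at this
    have h4 : ((l.choose j : ℕ) : ℝ) * ((j.factorial : ℕ):ℝ) * (((l-j).factorial : ℕ):ℝ)
        = ((l.factorial : ℕ):ℝ) := by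
      rw [← Nat.cast_mul, ← Nat.cast_mul, Nat.choose_mul_factorial_mul_factorial hjl]
    have h5 : s ^ (j:ℕ) * s ^ (l-j : ℕ) = s ^ (l:ℕ) := by
      rw [← pow_add]
      congr 1
      omega
    have h6 : (-1:ℝ)^j * A^j = (-A)^j := by
      rw [← neg_one_mul A, mul_pow]
    have hjf : ((j.factorial:ℕ):ℝ) ≠ 0 := Nat.cast_ne_zero.2 j.factorial_ne_zero
    have hljf : (((l-j).factorial:ℕ):ℝ) ≠ 0 := Nat.cast_ne_zero.2 (l-j).factorial_ne_zero
    have hlf : ((l.factorial:ℕ):ℝ) ≠ 0 := Nat.cast_ne_zero.2 l.factorial_ne_zero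
    have hsj : s ^ (j:ℕ) ≠ 0 := pow_ne_zero _ hsne
    have hsl : s ^ (l:ℕ) ≠ 0 := pow_ne_zero _ hsne
    rw [h1, h2, ← h4, ← h5, ← h6]
    unfold genChoose
    field_simp
    have hch : ((l.choose j : ℕ):ℝ) ≠ 0 := Nat.cast_ne_zero.2 (Nat.choose_pos hjl).ne'
    have i1 : s ^ (j:ℕ) * (s⁻¹) ^ (j:ℕ) = 1 := by
      rw [← mul_pow, mul_inv_cancel₀ hsne, one_pow]
    have i2 : s ^ (l-j:ℕ) * (s⁻¹) ^ (l-j:ℕ) = 1 := by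
      rw [← mul_pow, mul_inv_cancel₀ hsne, one_pow]
    have i3 : ((l.choose j : ℕ):ℝ) * ((l.choose j : ℕ):ℝ)⁻¹ = 1 := mul_inv_cancel₀ hch
    have i4 : (((l-j).factorial : ℕ):ℝ) * (((l-j).factorial : ℕ):ℝ)⁻¹ = 1 := mul_inv_cancel₀ hljf
    have i5 : ((j.factorial : ℕ):ℝ) * ((j.factorial : ℕ):ℝ)⁻¹ = 1 := mul_inv_cancel₀ hjf
    have i6 : s ^ (β+1) * (s ^ (β+1))⁻¹ = 1 := mul_inv_cancel₀ hsb1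
    have iAll : (s ^ (j:ℕ) * (s⁻¹) ^ (j:ℕ)) * (s ^ (l-j:ℕ) * (s⁻¹) ^ (l-j:ℕ)) *
        (((l.choose j : ℕ):ℝ) * ((l.choose j : ℕ):ℝ)⁻¹) *
        ((((l-j).factorial : ℕ):ℝ) * (((l-j).factorial : ℕ):ℝ)⁻¹) *
        (((j.factorial : ℕ):ℝ) * ((j.factorial : ℕ):ℝ)⁻¹) *
        (s ^ (β+1) * (s ^ (β+1))⁻¹) = 1 := by
      rw [i1, i2, i3, i4, i5, i6]; norm_num
    linear_combination (A^j) * h3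
      - (A^j * (∏ m ∈ Finset.range l, (β + 1 + (m:ℝ)))) * i3
  rw [Finset.sum_congr rfl hexpand, ← Finset.mul_sum, ← add_pow]
  rw [show -A + s = s - A by ring]
  rw [Gamma_add_nat β hβ l]
  rw [show β + (l:ℝ) + 1 = (β+1) + (l:ℝ) by ring, Real.rpow_add hs (β+1) (l:ℝ), Real.rpow_natCast]
  ring

lemma laguerre_recursion (a b c γ : ℝ) (hc : 0 < c)
    (habc : a + b = c) (hγ : -1 < γ) (l n : ℕ) :
    ((n:ℝ)+1) * ∫ t in Ioi (0:ℝ),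
        laguerre γ l (a*t) * laguerre γ (n+1) (b*t) * Real.exp (-(c*t)) * t ^ γ
      = a * ∫ t in Ioi (0:ℝ),
        laguerre (γ+1) l (a*t) * laguerre (γ+1) n (b*t) * Real.exp (-(c*t)) * t ^ (γ+1) := by
  have hexp : ∀ t : ℝ, Real.exp (-(a*t)) * Real.exp (-(b*t)) = Real.exp (-(c*t)) := by
    intro t; rw [← Real.exp_add]; congr 1; rw [← habc]; ring
  set f : ℝ → ℝ := fun t => (Real.exp (-(a*t)) * laguerre γ l (a*t)) *
      (Real.exp (-(b*t)) * t ^ (γ+1) * laguerre (γ+1) n (b*t)) with hf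
  have hlin : ∀ A t : ℝ, HasDerivAt (fun y : ℝ => A * y) A t := fun A t => by
    simpa using (hasDerivAt_id t).const_mul A
  have hderiv : ∀ t ∈ Ioi (0:ℝ), HasDerivAt f
      ((-a) * (laguerre (γ+1) l (a*t) * laguerre (γ+1) n (b*t) * Real.exp (-(c*t)) * t ^ (γ+1))
      + ((n:ℝ)+1) * (laguerre γ l (a*t) * laguerre γ (n+1) (b*t) * Real.exp (-(c*t)) * t ^ γ)) t := by
    intro t ht
    have ht' : (0:ℝ) < t := ht
    have hea : HasDerivAt (fun y : ℝ => Real.exp (-(a*y))) (Real.exp (-(a*t)) * (-a)) t :=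
      ((hlin a t).neg).exp
    have hla : HasDerivAt (fun y : ℝ => laguerre γ l (a*y))
        ((laguerre γ l (a*t) - laguerre (γ+1) l (a*t)) * a) t := by
      simpa [Function.comp_def] using (hasDerivAt_laguerre γ l (a*t)).comp t (hlin a t)
    have heb : HasDerivAt (fun y : ℝ => Real.exp (-(b*y))) (Real.exp (-(b*t)) * (-b)) t :=
      ((hlin b t).neg).exp
    have hlb : HasDerivAt (fun y : ℝ => laguerre (γ+1) n (b*y))
        ((laguerre (γ+1) n (b*t) - laguerre (γ+1+1) n (b*t)) * b) t := by
      simpa [Function.comp_def] using (hasDerivAt_laguerre (γ+1) n (b*t)).comp t (hlin b t)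
    have hrp : HasDerivAt (fun y : ℝ => y ^ (γ+1)) ((γ+1) * t ^ γ) t := by
      have := Real.hasDerivAt_rpow_const (x := t) (p := γ+1) (Or.inl (ne_of_gt ht'))
      rwa [show γ+1-1 = γ by ring] at this
    have hD := (hea.mul hla).mul ((heb.mul hrp).mul hlb)
    refine hD.congr_deriv ?_
    symm
    simp only [Pi.mul_apply]
    have hB := laguerre_identB γ n (b*t)
    have ht1 : t ^ (γ+1) = t ^ γ * t := by
      rw [Real.rpow_add ht', Real.rpow_one]
    rw [← hexp t, ht1]
    linear_combination (-(Real.exp (-(a*t)) * Real.exp (-(b*t)) * laguerre γ l (a*t) * t ^ γ)) * hB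
  have hcont : ContinuousWithinAt f (Ici 0) 0 := by
    have c1 : Continuous (fun t : ℝ => Real.exp (-(a*t)) * laguerre γ l (a*t)) :=
      (Real.continuous_exp.comp (continuous_const.mul continuous_id).neg).mul
        (laguerre_continuous γ l a)
    have c2 : ContinuousWithinAt (fun t : ℝ => t ^ (γ+1)) (Ici 0) 0 :=
      (Real.continuousAt_rpow_const 0 (γ+1) (Or.inr (by linarith))).continuousWithinAt
    have c3 : Continuous (fun t : ℝ => Real.exp (-(b*t))) :=
      Real.continuous_exp.comp (continuous_const.mul continuous_id).neg
    exact c1.continuousWithinAt.mul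
      ((c3.continuousWithinAt.mul c2).mul (laguerre_continuous (γ+1) n b).continuousWithinAt)
  have I1 : IntegrableOn (fun t : ℝ =>
      laguerre (γ+1) l (a*t) * laguerre (γ+1) n (b*t) * Real.exp (-(c*t)) * t ^ (γ+1)) (Ioi 0) :=
    integrableOn_laguerre_form (γ+1) (γ+1) (γ+1) a b c l n (by linarith) hc
  have I2 : IntegrableOn (fun t : ℝ =>
      laguerre γ l (a*t) * laguerre γ (n+1) (b*t) * Real.exp (-(c*t)) * t ^ γ) (Ioi 0) :=
    integrableOn_laguerre_form γ γ γ a b c l (n+1) hγ hc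
  have hint : IntegrableOn (fun t : ℝ =>
      (-a) * (laguerre (γ+1) l (a*t) * laguerre (γ+1) n (b*t) * Real.exp (-(c*t)) * t ^ (γ+1))
      + ((n:ℝ)+1) * (laguerre γ l (a*t) * laguerre γ (n+1) (b*t) * Real.exp (-(c*t)) * t ^ γ))
      (Ioi 0) := (I1.const_mul (-a)).add (I2.const_mul ((n:ℝ)+1))
  have htend : Tendsto f atTop (𝓝 0) := by
    have h := tendsto_laguerre_form γ (γ+1) (γ+1) a b c l n hc
    refine h.congr (fun t => ?_)
    rw [hf]
    show laguerre γ l (a*t) * laguerre (γ+1) n (b*t) * Real.exp (-(c*t)) * t ^ (γ+1)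
      = (Real.exp (-(a*t)) * laguerre γ l (a*t)) *
        (Real.exp (-(b*t)) * t ^ (γ+1) * laguerre (γ+1) n (b*t))
    rw [← hexp t]
    ring
  have key := integral_Ioi_of_hasDerivAt_of_tendsto hcont hderiv hint htend
  have h0 : f 0 = 0 := by
    rw [hf]
    show (Real.exp (-(a*0)) * laguerre γ l (a*0)) *
      (Real.exp (-(b*0)) * (0:ℝ) ^ (γ+1) * laguerre (γ+1) n (b*0)) = 0
    rw [Real.zero_rpow (show γ+1 ≠ 0 by linarith)]
    ring
  rw [h0, sub_zero] at key
  rw [MeasureTheory.integral_add (I1.const_mul (-a)) (I2.const_mul ((n:ℝ)+1)),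
    MeasureTheory.integral_const_mul, MeasureTheory.integral_const_mul] at key
  linarith [key]

theorem stmt3 (a b c γ : ℝ) (ha : 0 < a) (hb : 0 < b) (hc : 0 < c) (habc : a + b = c)
    (hγ : -1 < γ) (k l : ℕ) (hlk : l ≤ k) :
    (∫ t in Set.Ioi (0 : ℝ),
        laguerre γ l (a * t) * laguerre γ k (b * t) * Real.exp (-(c * t)) * t ^ γ)
      = Real.Gamma ((k : ℝ) + l + γ + 1) / ((Nat.factorial l : ℝ) * (Nat.factorial k : ℝ)) *
          (b ^ l * a ^ k / c ^ ((k : ℝ) + l + γ + 1)) := by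
  clear hlk
  induction k generalizing γ with
  | zero =>
    simp only [laguerre_zero, mul_one]
    rw [integral_single γ c a hγ hc l, show c - a = b by linarith]
    have e : ((0:ℕ):ℝ) + l + γ + 1 = γ + (l:ℝ) + 1 := by push_cast; ring
    rw [e]
    simp only [Nat.factorial_zero, Nat.cast_one, pow_zero, mul_one]
    ring
  | succ n ih =>
    have hrec := laguerre_recursion a b c γ hc habc hγ l n
    have ihh := ih (γ+1) (by linarith)
    have hne : ((n:ℝ)+1) ≠ 0 := by positivity
    apply mul_left_cancel₀ hne
    rw [hrec, ihh]
    have e : ((n+1:ℕ):ℝ) + l + γ + 1 = (n:ℝ) + l + (γ+1) + 1 := by push_cast; ring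
    rw [e, Nat.factorial_succ]
    have hlf : ((l.factorial:ℕ):ℝ) ≠ 0 := Nat.cast_ne_zero.2 l.factorial_ne_zero
    have hnf : ((n.factorial:ℕ):ℝ) ≠ 0 := Nat.cast_ne_zero.2 n.factorial_ne_zero
    have hcp : c ^ ((n:ℝ) + l + (γ+1) + 1) ≠ 0 := ne_of_gt (Real.rpow_pos_of_pos hc _)
    push_cast
    field_simp
    ring
end

section
/- Let β ∈ ℕ₀, ε ∈ (0,2) and c > 0. Then there exists a constant C > 0, depending only on β, c and ε, such that for all α, n ∈ ℕ₀ with 1 ≤ α ≤ c(1+n) and all x ∈ [−1+ε, 1] satisfying 1 − x ≤ (1/16)(1 − x_tr), where u := n + (α+β+1)/2 and x_tr := 1 − α²/(2u²), one has | ((1−x)/2)^{α/2} P_n^{(α,β)}(x) | ≤ C 2^{−α}. -/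
lemma genChoose_natCast_s10 (m j : ℕ) : genChoose (m : ℝ) j = (m.choose j : ℝ) := by
  unfold genChoose
  rcases le_or_gt j m with h | h
  · have hprod : (∏ i ∈ Finset.range j, ((m : ℝ) - (i : ℝ))) = (m.descFactorial j : ℝ) := by
      rw [Nat.descFactorial_eq_prod_range, Nat.cast_prod]
      refine Finset.prod_congr rfl fun i hi => ?_
      rw [Nat.cast_sub (le_of_lt (lt_of_lt_of_le (Finset.mem_range.mp hi) h))]
    rw [hprod, Nat.descFactorial_eq_factorial_mul_choose]
    push_cast
    rw [mul_comm]
    field_simp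
  · rw [Nat.choose_eq_zero_of_lt h,
      Finset.prod_eq_zero (Finset.mem_range.mpr h) (by simp)]
    simp

lemma pow_self_le_exp_mul_factorial : ∀ m : ℕ, (m : ℝ) ^ m ≤ Real.exp m * m.factorial := by
  intro m
  induction m with
  | zero => simp
  | succ m ih =>
    have key : ((m : ℝ) + 1) ^ m ≤ Real.exp 1 * (m : ℝ) ^ m := by
      rcases Nat.eq_zero_or_pos m with hm | hm
      · subst hm; simpa using Real.one_le_exp zero_le_one
      · have hm' : (0 : ℝ) < m := by exact_mod_cast hm
        have h1 : (m : ℝ) + 1 ≤ (m : ℝ) * Real.exp (1 / m) := by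
          have := Real.add_one_le_exp (1 / (m : ℝ))
          calc (m : ℝ) + 1 = (m : ℝ) * (1 / m + 1) := by field_simp; ring
            _ ≤ (m : ℝ) * Real.exp (1 / m) := by
                apply mul_le_mul_of_nonneg_left _ (le_of_lt hm')
                linarith
        calc ((m : ℝ) + 1) ^ m ≤ ((m : ℝ) * Real.exp (1 / m)) ^ m := by
              apply pow_le_pow_left₀ (by positivity) h1
          _ = (m : ℝ) ^ m * Real.exp (1 / m) ^ m := by rw [mul_pow]
          _ = (m : ℝ) ^ m * Real.exp 1 := by
              rw [← Real.exp_nat_mul]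
              congr 1
              field_simp
          _ = Real.exp 1 * (m : ℝ) ^ m := by ring
    have hfac : ((m + 1 : ℕ).factorial : ℝ) = ((m : ℝ) + 1) * (m.factorial : ℝ) := by
      rw [Nat.factorial_succ]; push_cast; ring
    calc ((m + 1 : ℕ) : ℝ) ^ (m + 1) = ((m : ℝ) + 1) * ((m : ℝ) + 1) ^ m := by
          push_cast; ring
      _ ≤ ((m : ℝ) + 1) * (Real.exp 1 * (m : ℝ) ^ m) := by
          exact mul_le_mul_of_nonneg_left key (by positivity)
      _ ≤ ((m : ℝ) + 1) * (Real.exp 1 * (Real.exp m * m.factorial)) := by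
          have : Real.exp 1 * (m : ℝ) ^ m ≤ Real.exp 1 * (Real.exp m * m.factorial) :=
            mul_le_mul_of_nonneg_left ih (le_of_lt (Real.exp_pos 1))
          exact mul_le_mul_of_nonneg_left this (by positivity)
      _ = Real.exp ((m + 1 : ℕ) : ℝ) * ((m + 1 : ℕ).factorial : ℝ) := by
          rw [hfac]
          push_cast
          rw [Real.exp_add]
          ring

lemma choose_mul_le_pow (a b : ℕ) :
    (((a + b).choose a : ℝ)) * (a : ℝ) ^ a * (b : ℝ) ^ b ≤ ((a : ℝ) + (b : ℝ)) ^ (a + b) := by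
  rw [add_pow]
  have hmem : a ∈ Finset.range (a + b + 1) := Finset.mem_range.mpr (by omega)
  have := Finset.single_le_sum
    (f := fun k => (a : ℝ) ^ k * (b : ℝ) ^ (a + b - k) * ((a + b).choose k : ℝ))
    (fun i _ => by positivity) hmem
  calc (((a + b).choose a : ℝ)) * (a : ℝ) ^ a * (b : ℝ) ^ b
      = (a : ℝ) ^ a * (b : ℝ) ^ (a + b - a) * ((a + b).choose a : ℝ) := by
        rw [Nat.add_sub_cancel_left]; ring
    _ ≤ _ := this

-- numeric facts
lemma exp364_le : Real.exp (3 / 64) ≤ 64 / 61 := by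
  have h := Real.add_one_le_exp (-(3 / 64) : ℝ)
  have hpos : (0 : ℝ) < 61 / 64 := by norm_num
  have h2 : (61 / 64 : ℝ) ≤ Real.exp (-(3 / 64)) := by linarith
  have h3 : Real.exp (3 / 64) = (Real.exp (-(3 / 64)))⁻¹ := by
    rw [← Real.exp_neg]; ring_nf
  rw [h3]
  rw [inv_le_comm₀ (Real.exp_pos _) (by norm_num)]
  calc (64 / 61 : ℝ)⁻¹ = 61 / 64 := by norm_num
    _ ≤ Real.exp (-(3 / 64)) := h2

lemma log_ineq : 3 * Real.log (7 / 3) + 3 / 16 ≤ 4 * Real.log 2 := by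
  have h1 : 1 - (432 / 343 : ℝ)⁻¹ ≤ Real.log (432 / 343) :=
    Real.one_sub_inv_le_log_of_pos (by norm_num)
  have h2 : Real.log (432 / 343 : ℝ) = 4 * Real.log 2 - 3 * Real.log (7 / 3) := by
    have : (432 / 343 : ℝ) = 2 ^ 4 / (7 / 3) ^ 3 := by norm_num
    rw [this, Real.log_div (by norm_num) (by norm_num), Real.log_pow, Real.log_pow]
    push_cast; ring
  rw [h2] at h1
  have : (1 : ℝ) - (432 / 343 : ℝ)⁻¹ = 89 / 432 := by norm_num
  rw [this] at h1
  linarith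

lemma log73_ge : (4 : ℝ) / 7 ≤ Real.log (7 / 3) := by
  have h1 : 1 - (7 / 3 : ℝ)⁻¹ ≤ Real.log (7 / 3) :=
    Real.one_sub_inv_le_log_of_pos (by norm_num)
  have : (1 : ℝ) - (7 / 3 : ℝ)⁻¹ = 4 / 7 := by norm_num
  linarith

-- regime B log bound: for N ≥ 1, A ≥ 1 real with 4N ≤ 3A:
lemma regimeB_log (N A : ℝ) (hN : 1 ≤ N) (hA : 1 ≤ A) (h : 4 * N ≤ 3 * A) :
    N * Real.log ((N + A) / N) ≤ A * (Real.log 2 - 3 / 64) := by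
  have hN0 : 0 < N := by linarith
  have hz : 0 < (N + A) / N := by positivity
  have tangent : Real.log ((N + A) / N) ≤ Real.log (7 / 3) + (3 / 7) * ((N + A) / N) - 1 := by
    have h1 : Real.log (((N + A) / N) * (3 / 7)) ≤ ((N + A) / N) * (3 / 7) - 1 :=
      Real.log_le_sub_one_of_pos (by positivity)
    have h2 : Real.log (((N + A) / N) * (3 / 7)) =
        Real.log ((N + A) / N) + Real.log (3 / 7) := by
      rw [Real.log_mul (by positivity) (by norm_num)]
    have h3 : Real.log (3 / 7 : ℝ) = -Real.log (7 / 3) := by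
      rw [← Real.log_inv]; norm_num
    rw [h2, h3] at h1
    linarith
  have key : N * Real.log ((N + A) / N) ≤ N * (Real.log (7 / 3) - 4 / 7) + (3 / 7) * A := by
    have := mul_le_mul_of_nonneg_left tangent (le_of_lt hN0)
    have hNA : N * ((3 / 7) * ((N + A) / N)) = (3 / 7) * (N + A) := by field_simp
    nlinarith [hNA]
  have hK1 : (0 : ℝ) ≤ Real.log (7 / 3) - 4 / 7 := by have := log73_ge; linarith
  have hfinal : N * (Real.log (7 / 3) - 4 / 7) + (3 / 7) * A ≤ A * (Real.log 2 - 3 / 64) := by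
    have hl := log_ineq
    nlinarith [mul_le_mul_of_nonneg_left h hK1]
  linarith

lemma step2core (n a : ℕ) (ha : 1 ≤ a) :
    Real.exp (3 * a / 64) * ((a : ℝ) / (8 * n + 4 * a + 4)) ^ a * ((n + a).choose n : ℝ)
      ≤ (1 / 2 : ℝ) ^ a := by
  have ha0 : (0 : ℝ) < a := by exact_mod_cast Nat.lt_of_lt_of_le Nat.zero_lt_one ha
  set D : ℝ := 8 * n + 4 * a + 4 with hDdef
  have hD0 : (0 : ℝ) < D := by positivity
  have hexp : Real.exp (3 * a / 64) = Real.exp (3 / 64) ^ a := by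
    rw [← Real.exp_nat_mul]; congr 1; ring
  have hE : Real.exp (3 / 64) * Real.exp 1 ≤ (64 / 61) * 2.7182818286 :=
    mul_le_mul exp364_le (le_of_lt Real.exp_one_lt_d9) (le_of_lt (Real.exp_pos 1))
      (by norm_num)
  rcases Nat.eq_zero_or_pos n with hn | hn
  · subst hn
    have hch : (((0 + a).choose 0 : ℕ) : ℝ) = 1 := by norm_num
    rw [hch, mul_one, hexp, ← mul_pow]
    apply pow_le_pow_left₀ (by positivity)
    have h1 : (a : ℝ) / D ≤ 1 / 4 := by
      rw [div_le_div_iff₀ hD0 (by norm_num), hDdef]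
      push_cast
      nlinarith
    nlinarith [exp364_le, Real.exp_pos (3 / 64 : ℝ), div_nonneg (le_of_lt ha0) (le_of_lt hD0)]
  · have hn0 : (1 : ℝ) ≤ n := by exact_mod_cast hn
    rcases le_or_gt (3 * a) (4 * n) with hreg | hreg
    · -- regime A : 3a ≤ 4n
      have hregR : 3 * (a : ℝ) ≤ 4 * n := by exact_mod_cast hreg
      have hsymm : (n + a).choose n = (n + a).choose a := Nat.choose_symm_add
      have hfac : (0 : ℝ) < (a.factorial : ℝ) := by positivity
      have hkey : (a : ℝ) ^ a ≤ Real.exp 1 ^ a * a.factorial := by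
        have h := pow_self_le_exp_mul_factorial a
        have : Real.exp (a : ℝ) = Real.exp 1 ^ a := by
          rw [← Real.exp_nat_mul]; congr 1; ring
        linarith [this ▸ h]
      have hchoose : (((n + a).choose n : ℕ) : ℝ) ≤
          ((n : ℝ) + a) ^ a * Real.exp 1 ^ a / (a : ℝ) ^ a := by
        rw [hsymm]
        have h1 : (((n + a).choose a : ℕ) : ℝ) ≤ ((n : ℝ) + a) ^ a / a.factorial := by
          have h := Nat.choose_le_pow_div (α := ℝ) a (n + a)
          push_cast at h ⊢
          exact h
        have h2 : ((n : ℝ) + a) ^ a / a.factorial ≤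
            ((n : ℝ) + a) ^ a * Real.exp 1 ^ a / (a : ℝ) ^ a := by
          rw [div_le_div_iff₀ hfac (by positivity)]
          push_cast
          have hnn : (0 : ℝ) ≤ ((n : ℝ) + a) ^ a := by positivity
          calc ((n : ℝ) + a) ^ a * (a : ℝ) ^ a
              ≤ ((n : ℝ) + a) ^ a * (Real.exp 1 ^ a * a.factorial) :=
                mul_le_mul_of_nonneg_left hkey hnn
            _ = ((n : ℝ) + a) ^ a * Real.exp 1 ^ a * a.factorial := by ring
        exact le_trans h1 h2
      have heq : Real.exp (3 / 64) ^ a * ((a : ℝ) / D) ^ a *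
          (((n : ℝ) + a) ^ a * Real.exp 1 ^ a / (a : ℝ) ^ a) =
          (Real.exp (3 / 64) * Real.exp 1 * (((n : ℝ) + a) / D)) ^ a := by
        rw [mul_pow, mul_pow, div_pow, div_pow]
        field_simp
      have hbase : Real.exp (3 / 64) * Real.exp 1 * (((n : ℝ) + a) / D) ≤ 1 / 2 := by
        have hq : Real.exp (3 / 64) * Real.exp 1 * ((n : ℝ) + a) ≤
            (64 / 61) * 2.7182818286 * ((n : ℝ) + a) :=
          mul_le_mul_of_nonneg_right hE (by positivity)
        have hlin : 2 * ((64 / 61) * 2.7182818286 * ((n : ℝ) + a)) ≤ D := by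
          rw [hDdef]; nlinarith [hregR, hn0]
        have hrw : Real.exp (3 / 64) * Real.exp 1 * (((n : ℝ) + a) / D) =
            Real.exp (3 / 64) * Real.exp 1 * ((n : ℝ) + a) / D := by ring
        rw [hrw, div_le_iff₀ hD0]
        nlinarith [hq, hlin]
      calc Real.exp (3 * a / 64) * ((a : ℝ) / D) ^ a * ((n + a).choose n : ℝ)
          = Real.exp (3 / 64) ^ a * ((a : ℝ) / D) ^ a * ((n + a).choose n : ℝ) := by rw [hexp]
        _ ≤ Real.exp (3 / 64) ^ a * ((a : ℝ) / D) ^ a *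
            (((n : ℝ) + a) ^ a * Real.exp 1 ^ a / (a : ℝ) ^ a) :=
            mul_le_mul_of_nonneg_left hchoose (by positivity)
        _ = (Real.exp (3 / 64) * Real.exp 1 * (((n : ℝ) + a) / D)) ^ a := heq
        _ ≤ (1 / 2 : ℝ) ^ a := pow_le_pow_left₀ (by positivity) hbase a
    · -- regime B : 4n ≤ 3a
      have hregR : 4 * (n : ℝ) ≤ 3 * a := by
        have : (4 * n : ℕ) ≤ 3 * a := by omega
        exact_mod_cast this
      have hN0 : (0 : ℝ) < (n : ℝ) := by linarith
      have hL2 := choose_mul_le_pow n a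
      have hchoose : (((n + a).choose n : ℕ) : ℝ) ≤
          ((n : ℝ) + a) ^ (n + a) / ((n : ℝ) ^ n * (a : ℝ) ^ a) := by
        rw [le_div_iff₀ (by positivity)]
        calc (((n + a).choose n : ℕ) : ℝ) * ((n : ℝ) ^ n * (a : ℝ) ^ a)
            = (((n + a).choose n : ℕ) : ℝ) * (n : ℝ) ^ n * (a : ℝ) ^ a := by ring
          _ ≤ ((n : ℝ) + a) ^ (n + a) := hL2
      have heq : Real.exp (3 / 64) ^ a * ((a : ℝ) / D) ^ a *
          (((n : ℝ) + a) ^ (n + a) / ((n : ℝ) ^ n * (a : ℝ) ^ a)) =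
          (Real.exp (3 / 64) * (((n : ℝ) + a) / D)) ^ a * (((n : ℝ) + a) / (n : ℝ)) ^ n := by
        rw [mul_pow, div_pow, div_pow, div_pow, pow_add]
        field_simp
      have h14 : ((n : ℝ) + a) / D ≤ 1 / 4 := by
        rw [div_le_div_iff₀ hD0 (by norm_num), hDdef]
        nlinarith [hN0, ha0]
      have hfirst : (Real.exp (3 / 64) * (((n : ℝ) + a) / D)) ^ a ≤
          (Real.exp (3 / 64) * (1 / 4)) ^ a := by
        apply pow_le_pow_left₀ (by positivity)
        exact mul_le_mul_of_nonneg_left h14 (le_of_lt (Real.exp_pos _))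
      have hgrow : (((n : ℝ) + a) / (n : ℝ)) ^ n ≤ (2 * Real.exp (-(3 / 64))) ^ a := by
        rw [← Real.log_le_log_iff (by positivity) (by positivity), Real.log_pow, Real.log_pow]
        have hlog2 : Real.log (2 * Real.exp (-(3 / 64))) = Real.log 2 - 3 / 64 := by
          rw [Real.log_mul (by norm_num) (ne_of_gt (Real.exp_pos _)), Real.log_exp]; ring
        rw [hlog2]
        exact regimeB_log (n : ℝ) (a : ℝ) hn0 (by exact_mod_cast ha) hregR
      have hone : Real.exp (3 / 64) * (1 / 4) * (2 * Real.exp (-(3 / 64))) = 1 / 2 := by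
        rw [Real.exp_neg]
        field_simp
        ring
      calc Real.exp (3 * a / 64) * ((a : ℝ) / D) ^ a * ((n + a).choose n : ℝ)
          = Real.exp (3 / 64) ^ a * ((a : ℝ) / D) ^ a * ((n + a).choose n : ℝ) := by rw [hexp]
        _ ≤ Real.exp (3 / 64) ^ a * ((a : ℝ) / D) ^ a *
            (((n : ℝ) + a) ^ (n + a) / ((n : ℝ) ^ n * (a : ℝ) ^ a)) :=
            mul_le_mul_of_nonneg_left hchoose (by positivity)
        _ = (Real.exp (3 / 64) * (((n : ℝ) + a) / D)) ^ a * (((n : ℝ) + a) / (n : ℝ)) ^ n := heq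
        _ ≤ (Real.exp (3 / 64) * (1 / 4)) ^ a * (2 * Real.exp (-(3 / 64))) ^ a :=
            mul_le_mul hfirst hgrow (by positivity) (by positivity)
        _ = (Real.exp (3 / 64) * (1 / 4) * (2 * Real.exp (-(3 / 64)))) ^ a := by
            simp only [mul_pow]
        _ = (1 / 2 : ℝ) ^ a := by rw [hone]

/-- Jacobi polynomial
`P_n^{(α,β)}(x) = ∑_{s=0}^n C(n+α, n-s) C(n+β, s) ((x-1)/2)^s ((x+1)/2)^(n-s)`. -/
noncomputable def jacobi (α β : ℝ) (n : ℕ) (x : ℝ) : ℝ :=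
  ∑ s ∈ Finset.range (n + 1),
    genChoose ((n : ℝ) + α) (n - s) * genChoose ((n : ℝ) + β) s *
      ((x - 1) / 2) ^ s * ((x + 1) / 2) ^ (n - s)

set_option maxHeartbeats 1600000 in
theorem stmt10 (β : ℕ) (ε : ℝ) (hε : ε ∈ Set.Ioo (0 : ℝ) 2) (c : ℝ) (hc : 0 < c) :
    ∃ C : ℝ, 0 < C ∧
      ∀ α n : ℕ, 1 ≤ α → (α : ℝ) ≤ c * (1 + (n : ℝ)) →
        ∀ x ∈ Set.Icc (-1 + ε) (1 : ℝ),
          1 - x ≤ (1 / 16) *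
              (1 - (1 - (α : ℝ) ^ 2 / (2 * ((n : ℝ) + ((α : ℝ) + (β : ℝ) + 1) / 2) ^ 2))) →
            |((1 - x) / 2) ^ ((α : ℝ) / 2) * jacobi (α : ℝ) (β : ℝ) n x|
              ≤ C * (2 : ℝ) ^ (-(α : ℝ)) := by
  obtain ⟨hε0, hε2⟩ := hε
  refine ⟨1, one_pos, ?_⟩
  intro a n ha _hac x hx hxtr
  obtain ⟨hxl, hxu⟩ := hx
  have ha0 : (0 : ℝ) < a := by exact_mod_cast Nat.lt_of_lt_of_le Nat.zero_lt_one ha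
  have hxm1 : -1 ≤ x := by linarith
  obtain ⟨u, hu⟩ : ∃ u : ℝ, u = (n : ℝ) + ((a : ℝ) + (β : ℝ) + 1) / 2 := ⟨_, rfl⟩
  rw [show (2 * ((n : ℝ) + ((a : ℝ) + (β : ℝ) + 1) / 2) ^ 2) = 2 * u ^ 2 by rw [hu]] at hxtr
  have hu0 : (0 : ℝ) < u := by
    have h1 : (0 : ℝ) ≤ (n : ℝ) := Nat.cast_nonneg n
    have h2 : (0 : ℝ) ≤ (β : ℝ) := Nat.cast_nonneg β
    rw [hu]; linarith
  obtain ⟨t, htdef⟩ : ∃ t : ℝ, t = (1 - x) / 2 := ⟨_, rfl⟩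
  have ht0 : 0 ≤ t := by rw [htdef]; linarith
  have htle : t ≤ ((a : ℝ) / (8 * u)) ^ 2 := by
    have h2u : (0 : ℝ) < u ^ 2 := by positivity
    have hsimp : (1 : ℝ) / 16 * (1 - (1 - (a : ℝ) ^ 2 / (2 * u ^ 2)))
        = (a : ℝ) ^ 2 / (32 * u ^ 2) := by
      ring
    have h1 : 1 - x ≤ (a : ℝ) ^ 2 / (32 * u ^ 2) := by
      rw [← hsimp]; exact hxtr
    have h2 : ((a : ℝ) / (8 * u)) ^ 2 = (a : ℝ) ^ 2 / (64 * u ^ 2) := by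
      rw [div_pow]; ring
    rw [htdef, h2]
    have h3 : (a : ℝ) ^ 2 / (32 * u ^ 2) / 2 = (a : ℝ) ^ 2 / (64 * u ^ 2) := by ring
    linarith
  have hnu : (n : ℝ) ≤ u := by
    have h1 : (0 : ℝ) ≤ (β : ℝ) := Nat.cast_nonneg β
    rw [hu]; linarith
  have hnb3u : (n : ℝ) + (β : ℝ) ≤ 3 * u := by
    have h1 : (0 : ℝ) ≤ (n : ℝ) := Nat.cast_nonneg n
    have h2 : (0 : ℝ) ≤ (β : ℝ) := Nat.cast_nonneg β
    rw [hu]; linarith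
  obtain ⟨y, hy⟩ : ∃ y : ℝ, y = 3 * (a : ℝ) / 64 := ⟨_, rfl⟩
  have hy0 : 0 ≤ y := by rw [hy]; positivity
  -- key induction claim
  have claim : ∀ s : ℕ, s ≤ n →
      (((n + a).choose (n - s) : ℕ) : ℝ) * (((n + β).choose s : ℕ) : ℝ) * t ^ s
        ≤ (((n + a).choose n : ℕ) : ℝ) * y ^ s / (s.factorial : ℝ) := by
    intro s hs
    induction s with
    | zero => simp
    | succ s ihs =>
      have hsn : s < n := hs
      have hs' : s ≤ n := le_of_lt hsn
      have IH := ihs hs'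
      have hsR : (s : ℝ) ≤ (n : ℝ) := by exact_mod_cast hs'
      have hap : (0 : ℝ) < (a : ℝ) + s + 1 := by positivity
      have hsp : (0 : ℝ) < (s : ℝ) + 1 := by positivity
      have I1 : (((n + a).choose (n - (s + 1)) : ℕ) : ℝ) * ((a : ℝ) + s + 1)
          = (((n + a).choose (n - s) : ℕ) : ℝ) * ((n : ℝ) - s) := by
        have h := Nat.choose_succ_right_eq (n + a) (n - s - 1)
        have h1 : n - s - 1 + 1 = n - s := by omega
        have h2 : n + a - (n - s - 1) = a + s + 1 := by omega
        rw [h1, h2] at h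
        have h3 : n - (s + 1) = n - s - 1 := by omega
        rw [h3]
        have hc := congrArg (Nat.cast : ℕ → ℝ) h
        push_cast [Nat.cast_sub hs'] at hc
        linarith
      have I2 : (((n + β).choose (s + 1) : ℕ) : ℝ) * ((s : ℝ) + 1)
          = (((n + β).choose s : ℕ) : ℝ) * ((n : ℝ) + (β : ℝ) - s) := by
        have h := Nat.choose_succ_right_eq (n + β) s
        have hc := congrArg (Nat.cast : ℕ → ℝ) h
        push_cast [Nat.cast_sub (show s ≤ n + β by omega)] at hc
        linarith
      have e1 : (((n + a).choose (n - (s + 1)) : ℕ) : ℝ)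
          = (((n + a).choose (n - s) : ℕ) : ℝ) * ((n : ℝ) - s) / ((a : ℝ) + s + 1) := by
        rw [eq_div_iff (ne_of_gt hap)]; exact I1
      have e2 : (((n + β).choose (s + 1) : ℕ) : ℝ)
          = (((n + β).choose s : ℕ) : ℝ) * ((n : ℝ) + (β : ℝ) - s) / ((s : ℝ) + 1) := by
        rw [eq_div_iff (ne_of_gt hsp)]; exact I2
      have hns0 : (0 : ℝ) ≤ (n : ℝ) - s := by linarith
      have hnbs0 : (0 : ℝ) ≤ (n : ℝ) + (β : ℝ) - s := by
        have : (0 : ℝ) ≤ (β : ℝ) := Nat.cast_nonneg β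
        linarith
      have hF0 : 0 ≤ t * (((n : ℝ) - s) * ((n : ℝ) + (β : ℝ) - s))
          / (((a : ℝ) + s + 1) * ((s : ℝ) + 1)) := by positivity
      have hFle : t * (((n : ℝ) - s) * ((n : ℝ) + (β : ℝ) - s))
          / (((a : ℝ) + s + 1) * ((s : ℝ) + 1)) ≤ y / ((s : ℝ) + 1) := by
        rw [div_le_div_iff₀ (by positivity) hsp]
        have hb1 : (n : ℝ) - s ≤ u := by linarith
        have hb2 : (n : ℝ) + (β : ℝ) - s ≤ 3 * u := by
          have hs0 : (0 : ℝ) ≤ (s : ℝ) := Nat.cast_nonneg s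
          linarith
        have ht' : t ≤ (a : ℝ) ^ 2 / (64 * u ^ 2) := by
          have h2 : ((a : ℝ) / (8 * u)) ^ 2 = (a : ℝ) ^ 2 / (64 * u ^ 2) := by
            rw [div_pow]; ring
          have h3 := htle
          rw [h2] at h3
          linarith
        have hprod : ((n : ℝ) - s) * ((n : ℝ) + (β : ℝ) - s) ≤ 3 * u ^ 2 := by
          nlinarith
        have hstep : t * (((n : ℝ) - s) * ((n : ℝ) + (β : ℝ) - s)) ≤ 3 * (a : ℝ) ^ 2 / 64 := by
          calc t * (((n : ℝ) - s) * ((n : ℝ) + (β : ℝ) - s))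
              ≤ ((a : ℝ) ^ 2 / (64 * u ^ 2)) * (3 * u ^ 2) := by
                apply mul_le_mul ht' hprod (by positivity) (by positivity)
            _ = 3 * (a : ℝ) ^ 2 / 64 := by
                have hune : u ≠ 0 := ne_of_gt hu0
                field_simp
        have hya : 3 * (a : ℝ) ^ 2 / 64 * ((s : ℝ) + 1) ≤ y * (((a : ℝ) + s + 1) * ((s : ℝ) + 1)) := by
          rw [hy]
          have hs0 : (0 : ℝ) ≤ (s : ℝ) := Nat.cast_nonneg s
          nlinarith [hs0, ha0, hsp, mul_nonneg (mul_nonneg ha0.le hsp.le) hsp.le]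
        calc t * (((n : ℝ) - s) * ((n : ℝ) + (β : ℝ) - s)) * ((s : ℝ) + 1)
            ≤ 3 * (a : ℝ) ^ 2 / 64 * ((s : ℝ) + 1) := by
              apply mul_le_mul_of_nonneg_right hstep (le_of_lt hsp)
          _ ≤ y * (((a : ℝ) + s + 1) * ((s : ℝ) + 1)) := hya
      calc (((n + a).choose (n - (s + 1)) : ℕ) : ℝ) * (((n + β).choose (s + 1) : ℕ) : ℝ)
            * t ^ (s + 1)
          = ((((n + a).choose (n - s) : ℕ) : ℝ) * (((n + β).choose s : ℕ) : ℝ) * t ^ s)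
            * (t * (((n : ℝ) - s) * ((n : ℝ) + (β : ℝ) - s))
              / (((a : ℝ) + s + 1) * ((s : ℝ) + 1))) := by
            rw [e1, e2, pow_succ]
            have h1 : ((a : ℝ) + s + 1) ≠ 0 := ne_of_gt hap
            have h2 : ((s : ℝ) + 1) ≠ 0 := ne_of_gt hsp
            field_simp
        _ ≤ ((((n + a).choose n : ℕ) : ℝ) * y ^ s / (s.factorial : ℝ)) * (y / ((s : ℝ) + 1)) :=
            mul_le_mul IH hFle hF0 (by positivity)
        _ = (((n + a).choose n : ℕ) : ℝ) * y ^ (s + 1) / ((s + 1).factorial : ℝ) := by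
            rw [Nat.factorial_succ, pow_succ]
            push_cast
            field_simp
  -- bound on |jacobi|
  have hgc1 : ∀ s : ℕ, genChoose ((n : ℝ) + (a : ℝ)) s = (((n + a).choose s : ℕ) : ℝ) := by
    intro s
    rw [show ((n : ℝ) + (a : ℝ)) = (((n + a : ℕ) : ℝ)) by push_cast; ring, genChoose_natCast_s10]
  have hgc2 : ∀ s : ℕ, genChoose ((n : ℝ) + (β : ℝ)) s = (((n + β).choose s : ℕ) : ℝ) := by
    intro s
    rw [show ((n : ℝ) + (β : ℝ)) = (((n + β : ℕ) : ℝ)) by push_cast; ring, genChoose_natCast_s10]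
  have hxp0 : 0 ≤ (x + 1) / 2 := by linarith
  have hxp1 : (x + 1) / 2 ≤ 1 := by linarith
  have habs : ∀ s ∈ Finset.range (n + 1),
      |genChoose ((n : ℝ) + (a : ℝ)) (n - s) * genChoose ((n : ℝ) + (β : ℝ)) s *
        ((x - 1) / 2) ^ s * ((x + 1) / 2) ^ (n - s)|
      ≤ (((n + a).choose n : ℕ) : ℝ) * y ^ s / (s.factorial : ℝ) := by
    intro s hs
    have hsn : s ≤ n := by
      have := Finset.mem_range.mp hs; omega
    rw [hgc1, hgc2]
    have hx1t : |((x - 1) / 2)| = t := by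
      rw [htdef, abs_of_nonpos (by linarith : (x - 1) / 2 ≤ 0)]; ring
    have c1 : (0 : ℝ) ≤ (((n + a).choose (n - s) : ℕ) : ℝ) := Nat.cast_nonneg _
    have c2 : (0 : ℝ) ≤ (((n + β).choose s : ℕ) : ℝ) := Nat.cast_nonneg _
    rw [abs_mul, abs_mul, abs_mul, abs_pow, abs_pow, hx1t,
      abs_of_nonneg c1, abs_of_nonneg c2, abs_of_nonneg hxp0]
    calc (((n + a).choose (n - s) : ℕ) : ℝ) * (((n + β).choose s : ℕ) : ℝ) * t ^ s *
          ((x + 1) / 2) ^ (n - s)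
        ≤ (((n + a).choose (n - s) : ℕ) : ℝ) * (((n + β).choose s : ℕ) : ℝ) * t ^ s * 1 := by
          apply mul_le_mul_of_nonneg_left (pow_le_one₀ hxp0 hxp1) (by positivity)
      _ = (((n + a).choose (n - s) : ℕ) : ℝ) * (((n + β).choose s : ℕ) : ℝ) * t ^ s := by ring
      _ ≤ _ := claim s hsn
  have hjac : |jacobi (a : ℝ) (β : ℝ) n x| ≤
      (((n + a).choose n : ℕ) : ℝ) * Real.exp y := by
    calc |jacobi (a : ℝ) (β : ℝ) n x|
        ≤ ∑ s ∈ Finset.range (n + 1),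
            |genChoose ((n : ℝ) + (a : ℝ)) (n - s) * genChoose ((n : ℝ) + (β : ℝ)) s *
              ((x - 1) / 2) ^ s * ((x + 1) / 2) ^ (n - s)| := by
          rw [jacobi]
          exact Finset.abs_sum_le_sum_abs _ _
      _ ≤ ∑ s ∈ Finset.range (n + 1),
            (((n + a).choose n : ℕ) : ℝ) * y ^ s / (s.factorial : ℝ) :=
          Finset.sum_le_sum habs
      _ = (((n + a).choose n : ℕ) : ℝ) * ∑ s ∈ Finset.range (n + 1),
            y ^ s / (s.factorial : ℝ) := by
          rw [Finset.mul_sum]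
          refine Finset.sum_congr rfl fun s _ => ?_
          ring
      _ ≤ (((n + a).choose n : ℕ) : ℝ) * Real.exp y := by
          apply mul_le_mul_of_nonneg_left (Real.sum_le_exp_of_nonneg hy0 (n + 1))
            (Nat.cast_nonneg _)
  -- weight bound
  have hq0 : (0 : ℝ) ≤ (a : ℝ) / (8 * u) := by positivity
  have hW : t ^ ((a : ℝ) / 2) ≤ ((a : ℝ) / (8 * u)) ^ a := by
    calc t ^ ((a : ℝ) / 2) ≤ (((a : ℝ) / (8 * u)) ^ 2) ^ ((a : ℝ) / 2) :=
          Real.rpow_le_rpow ht0 htle (by positivity)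
      _ = ((a : ℝ) / (8 * u)) ^ ((2 : ℝ) * ((a : ℝ) / 2)) := by
          rw [← Real.rpow_natCast ((a : ℝ) / (8 * u)) 2, ← Real.rpow_mul hq0]
          norm_num
      _ = ((a : ℝ) / (8 * u)) ^ ((a : ℝ)) := by
          rw [show (2 : ℝ) * ((a : ℝ) / 2) = (a : ℝ) by ring]
      _ = ((a : ℝ) / (8 * u)) ^ a := Real.rpow_natCast _ a
  -- denominator comparison
  have hden : (a : ℝ) / (8 * u) ≤ (a : ℝ) / (8 * n + 4 * a + 4) := by
    apply div_le_div_of_nonneg_left (le_of_lt ha0) (by positivity)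
    have hb : (0 : ℝ) ≤ (β : ℝ) := Nat.cast_nonneg β
    rw [hu]; linarith
  have hWn : ((a : ℝ) / (8 * u)) ^ a ≤ ((a : ℝ) / (8 * n + 4 * a + 4)) ^ a :=
    pow_le_pow_left₀ hq0 hden a
  -- final assembly
  have hWpos : 0 ≤ t ^ ((a : ℝ) / 2) := Real.rpow_nonneg ht0 _
  have hfin : t ^ ((a : ℝ) / 2) * |jacobi (a : ℝ) (β : ℝ) n x| ≤ (1 / 2 : ℝ) ^ a := by
    calc t ^ ((a : ℝ) / 2) * |jacobi (a : ℝ) (β : ℝ) n x|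
        ≤ ((a : ℝ) / (8 * u)) ^ a * ((((n + a).choose n : ℕ) : ℝ) * Real.exp y) :=
          mul_le_mul hW hjac (abs_nonneg _) (by positivity)
      _ ≤ ((a : ℝ) / (8 * n + 4 * a + 4)) ^ a * ((((n + a).choose n : ℕ) : ℝ) * Real.exp y) :=
          mul_le_mul_of_nonneg_right hWn (by positivity)
      _ = Real.exp (3 * (a : ℝ) / 64) * ((a : ℝ) / (8 * n + 4 * a + 4)) ^ a *
            (((n + a).choose n : ℕ) : ℝ) := by rw [hy]; ring
      _ ≤ (1 / 2 : ℝ) ^ a := step2core n a ha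
  have h2a : ((1 : ℝ) / 2) ^ a = (2 : ℝ) ^ (-(a : ℝ)) := by
    rw [← Real.rpow_natCast ((1 : ℝ) / 2) a, one_div,
      Real.inv_rpow (by norm_num : (0 : ℝ) ≤ 2),
      ← Real.rpow_neg (by norm_num : (0 : ℝ) ≤ 2)]
  rw [one_mul, ← h2a, abs_mul]
  have habsW : |((1 - x) / 2) ^ ((a : ℝ) / 2)| = t ^ ((a : ℝ) / 2) := by
    rw [← htdef]
    exact abs_of_nonneg hWpos
  rw [habsW]
  exact hfin
end
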